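/- arXiv:1908.11606 — 4 statements merged into one kernel-verified Lean document; each statement's English description precedes it below -/
import Mathlib

section
/- For v, w ∈ W^I ⊆ S_n one has v ≤ w in Bruhat order if and only if the path λ^v lies weakly below the path λ^w; that is, if and only if hgt_j(λ^v) ≤ hgt_j(λ^w) for every 0 ≤ j ≤ n, where hgt_j(λ) := |i − j| + 2·#{boxes labeled j below λ} is the height of the lattice path of λ at horizontal coordinate j. -/
open scoped Classical

noncomputable section

/-- The simple transposition `s_j` of `S_n` (0-indexed: it swaps positions `j` and `j+1`). -/
def sT (n j : ℕ) : Equiv.Perm (Fin n) :=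
  if h : j + 1 < n then Equiv.swap ⟨j, Nat.lt_of_succ_lt h⟩ ⟨j + 1, h⟩ else 1

/-- The Coxeter length of a permutation, as its number of inversions. -/
def invLen {n : ℕ} (w : Equiv.Perm (Fin n)) : ℕ :=
  (Finset.univ.filter fun p : Fin n × Fin n => p.1 < p.2 ∧ w p.2 < w p.1).card

/-- The parabolic subgroup `W_I ≅ S_i × S_{n-i}` generated by all simple transpositions
except the `i`-th one (1-indexed: we exclude `s_i`, i.e. the 0-indexed `sT n (i-1)`). -/
def WIsub (n i : ℕ) : Subgroup (Equiv.Perm (Fin n)) :=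
  Subgroup.closure {g | ∃ m : ℕ, m + 1 < n ∧ m + 1 ≠ i ∧ g = sT n m}

/-- `W^I`: the minimal length representatives of the cosets `w W_I`. -/
def minRep (n i : ℕ) : Set (Equiv.Perm (Fin n)) :=
  {w | ∀ m : ℕ, m + 1 < n → m + 1 ≠ i → invLen w < invLen (w * sT n m)}

/-- The path `λ^w = w · (↘,…,↘,↗,…,↗)` associated to `w`; `true` encodes `↘`,
`false` encodes `↗`; the symmetric group permutes positions. -/
def toPath {n : ℕ} (i : ℕ) (w : Equiv.Perm (Fin n)) : Fin n → Bool :=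
  fun k => decide (((w⁻¹ k : Fin n) : ℕ) < i)

/-- `Λ_{n,i}`: the set of `n`-tuples of `↗`/`↘` with exactly `i` entries `↘`. -/
def pathSet (n i : ℕ) : Set (Fin n → Bool) :=
  {lam | (Finset.univ.filter fun k => lam k = true).card = i}

/-- The height of the lattice path of `λ` at horizontal coordinate `j`
(the path starts at `(0,i)`; `↘` is a down-step, `↗` an up-step). -/
def hgt {n : ℕ} (i : ℕ) (lam : Fin n → Bool) (j : ℕ) : ℤ :=
  (i : ℤ) + ∑ k ∈ Finset.univ.filter (fun k : Fin n => (k : ℕ) < j),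
      (if lam k then (-1 : ℤ) else 1)

/-- `λ ≤ μ`: the path `λ` lies weakly below the path `μ`. -/
def pathLE {n : ℕ} (i : ℕ) (lam mu : Fin n → Bool) : Prop :=
  ∀ j ≤ n, hgt i lam j ≤ hgt i mu j

/-- Bruhat order on `S_n`: generated by `a < t·a` for transpositions `t`
with strictly increasing length. -/
def bruhatLE {n : ℕ} (u v : Equiv.Perm (Fin n)) : Prop :=
  Relation.ReflTransGen
    (fun a b => (∃ x y : Fin n, x ≠ y ∧ b = Equiv.swap x y * a) ∧ invLen a < invLen b) u v

/-- A Dyck strip of height `h`: the set of boxes (recorded by their centers) centered at the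
integral points of a Dyck path from `(x₀,h)` to `(x₀+2l,h)` staying weakly below height `h`. -/
def IsDyckStrip (D : Finset (ℤ × ℤ)) (h : ℤ) : Prop :=
  ∃ (x₀ : ℤ) (l : ℕ) (d : ℕ → ℤ),
    d 0 = 0 ∧ d (2 * l) = 0 ∧
    (∀ k < 2 * l, d (k + 1) = d k + 1 ∨ d (k + 1) = d k - 1) ∧
    (∀ k ≤ 2 * l, d k ≤ 0) ∧
    D = (Finset.range (2 * l + 1)).image fun k : ℕ => (x₀ + (k : ℤ), h + d k)

/-- The region `A(λ,μ)` between two paths `λ ≤ μ`, as the set of centers of the boxes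
lying strictly between the two lattice paths. -/
def region {n : ℕ} (i : ℕ) (lam mu : Fin n → Bool) : Set (ℤ × ℤ) :=
  {b | 0 ≤ b.1 ∧ b.1 ≤ (n : ℤ) ∧ Odd (b.1 + b.2 + (i : ℤ)) ∧
    hgt i lam b.1.toNat < b.2 ∧ b.2 < hgt i mu b.1.toNat}

/-- A Dyck partition of a region `A`: a partition of the boxes of `A` into Dyck strips. -/
def IsDyckPartition (P : Finset (Finset (ℤ × ℤ))) (A : Set (ℤ × ℤ)) : Prop :=
  (∀ D ∈ P, ∃ h, IsDyckStrip D h) ∧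
  (∀ D ∈ P, ∀ D' ∈ P, D ≠ D' → Disjoint D D') ∧
  (⋃ D ∈ P, (D : Set (ℤ × ℤ))) = A

/-- Type 1 condition: if some strip `D'` contains a box just above a box of `D`, then every box
just above a box of `D` is in `D'`. -/
def IsType1 (P : Finset (Finset (ℤ × ℤ))) : Prop :=
  ∀ D ∈ P, ∀ D' ∈ P, D ≠ D' → (∃ b ∈ D, (b.1, b.2 + 2) ∈ D') →
    ∀ b ∈ D, (b.1, b.2 + 2) ∈ D'

/-- The boxes just below, SW and SE of a box `b`. -/
def belowBoxes (b : ℤ × ℤ) : Finset (ℤ × ℤ) :=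
  {(b.1, b.2 - 2), (b.1 - 1, b.2 - 1), (b.1 + 1, b.2 - 1)}

/-- Type 2 condition: if some strip `D'` contains a box just below, SW or SE of a box of `D`,
then every box just below, SW or SE of a box of `D` belongs to `D` or `D'`. -/
def IsType2 (P : Finset (Finset (ℤ × ℤ))) : Prop :=
  ∀ D ∈ P, ∀ D' ∈ P, D ≠ D' → (∃ b ∈ D, ∃ c ∈ belowBoxes b, c ∈ D') →
    ∀ b ∈ D, ∀ c ∈ belowBoxes b, c ∈ D ∨ c ∈ D'

/-- `Conf¹(λ,μ)`: the set of type-1 Dyck partitions of the region `A(λ,μ)`. -/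
def Conf1 {n : ℕ} (i : ℕ) (lam mu : Fin n → Bool) : Set (Finset (Finset (ℤ × ℤ))) :=
  {P | IsDyckPartition P (region i lam mu) ∧ IsType1 P}

/-- `Conf²(λ,μ)`: the set of type-2 Dyck partitions of the region `A(λ,μ)`. -/
def Conf2 {n : ℕ} (i : ℕ) (lam mu : Fin n → Bool) : Set (Finset (Finset (ℤ × ℤ))) :=
  {P | IsDyckPartition P (region i lam mu) ∧ IsType2 P}

/-- The height of a Dyck strip (the largest `y`-coordinate of one of its boxes). -/
def stripHeight (D : Finset (ℤ × ℤ)) : ℤ := WithBot.unbotD 0 ((D.image Prod.snd).max)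

/-- Two Dyck strips are distant if no box of one is just above or just below a box of the other. -/
def Distant (D C : Finset (ℤ × ℤ)) : Prop :=
  ∀ b ∈ D, (b.1, b.2 + 2) ∉ C ∧ (b.1, b.2 - 2) ∉ C

/-- The order relation `P ≻ Q` on Dyck partitions. -/
def DPsucc (P Q : Finset (Finset (ℤ × ℤ))) : Prop :=
  ∃ h : ℤ, 0 < h ∧
    (∀ j : ℤ, h < j →
      P.filter (fun D => stripHeight D = j) = Q.filter (fun D => stripHeight D = j)) ∧
    P.filter (fun D => stripHeight D = h) ≠ Q.filter (fun D => stripHeight D = h) ∧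
    (∀ D ∈ P.filter (fun D => stripHeight D = h),
      ∃ D' ∈ Q.filter (fun D => stripHeight D = h), D ⊆ D')


-- Auxiliary development
lemma Equiv.Perm.apply_inv_self {α : Type*} (f : Equiv.Perm α) (x : α) : f (f⁻¹ x) = x :=
  f.apply_symm_apply x

lemma Equiv.Perm.inv_apply_self {α : Type*} (f : Equiv.Perm α) (x : α) : f⁻¹ (f x) = x :=
  f.symm_apply_apply x

lemma invLen_eq_sum {n : ℕ} (w : Equiv.Perm (Fin n)) :
    invLen w = ∑ p ∈ Finset.univ.filter (fun p : Fin n × Fin n => p.1 < p.2),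
      (if w p.2 < w p.1 then 1 else 0) := by
  rw [invLen, Finset.card_filter, Finset.sum_filter]
  apply Finset.sum_congr rfl
  intro p _
  by_cases h1 : p.1 < p.2 <;> by_cases h2 : w p.2 < w p.1 <;> simp [h1, h2]

lemma invLen_lt_swap_mul {n : ℕ} (b : Equiv.Perm (Fin n)) (x y : Fin n)
    (hxy : x < y) (hpos : b⁻¹ x < b⁻¹ y) :
    invLen b < invLen (Equiv.swap x y * b) := by
  set P : Fin n := b⁻¹ x with hP
  set Q : Fin n := b⁻¹ y with hQ
  have hPQ : P < Q := hpos
  set σ : Equiv.Perm (Fin n) := Equiv.swap P Q with hσ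
  set c : Equiv.Perm (Fin n) := Equiv.swap x y * b with hc
  have hconj : c = b * σ := Equiv.swap_mul_eq_mul_swap b x y
  have hbP : b P = x := Equiv.Perm.apply_inv_self b x
  have hbQ : b Q = y := Equiv.Perm.apply_inv_self b y
  have hσP : σ P = Q := Equiv.swap_apply_left P Q
  have hσQ : σ Q = P := Equiv.swap_apply_right P Q
  have hσo : ∀ m : Fin n, m ≠ P → m ≠ Q → σ m = m := fun m h1 h2 =>
    Equiv.swap_apply_of_ne_of_ne h1 h2
  have hσσ : ∀ m : Fin n, σ (σ m) = m := by
    intro m; rw [hσ]; exact Equiv.swap_apply_self _ _ _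
  set S := Finset.univ.filter (fun p : Fin n × Fin n => p.1 < p.2) with hS
  set F : Fin n × Fin n → Fin n × Fin n :=
    fun p => if p.1 < P ∨ Q < p.2 then (σ p.1, σ p.2) else p with hF
  have hσord : ∀ p : Fin n × Fin n, p.1 < p.2 → (p.1 < P ∨ Q < p.2) → σ p.1 < σ p.2 := by
    intro p h hcnd
    rcases hcnd with h1 | h2
    · have e1 : σ p.1 = p.1 := hσo _ (by omega) (by omega)
      rw [e1]
      rcases eq_or_ne p.2 P with he | n1
      · rw [he, hσP]; omega
      rcases eq_or_ne p.2 Q with he | n2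
      · rw [he, hσQ]; omega
      · rw [hσo _ n1 n2]; omega
    · have e2 : σ p.2 = p.2 := hσo _ (by omega) (by omega)
      rw [e2]
      rcases eq_or_ne p.1 P with he | n1
      · rw [he, hσP]; omega
      rcases eq_or_ne p.1 Q with he | n2
      · rw [he, hσQ]; omega
      · rw [hσo _ n1 n2]; omega
  have hmapS : ∀ p ∈ S, F p ∈ S := by
    intro p hp
    rw [hS, Finset.mem_filter] at hp ⊢
    refine ⟨Finset.mem_univ _, ?_⟩
    rw [hF]
    by_cases hcnd : p.1 < P ∨ Q < p.2
    · simp only [hcnd, if_true]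
      exact hσord p hp.2 hcnd
    · simp only [hcnd, if_false]; exact hp.2
  have hFF : ∀ p : Fin n × Fin n, p.1 < p.2 → F (F p) = p := by
    intro p hlt
    by_cases hcnd : p.1 < P ∨ Q < p.2
    · have h2 : F p = (σ p.1, σ p.2) := by rw [hF]; simp [hcnd]
      have hcnd2 : (σ p.1 : Fin n) < P ∨ Q < σ p.2 := by
        rcases hcnd with h1 | h1
        · left; rw [hσo _ (by omega) (by omega)]; exact h1
        · right; rw [hσo _ (by omega) (by omega)]; exact h1
      rw [h2, hF]
      simp only [hcnd2, if_true]
      rw [hσσ, hσσ]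
    · have h2 : F p = p := by rw [hF]; simp [hcnd]
      rw [h2, h2]
  -- reindex
  have hre : ∑ p ∈ S, (if c p.2 < c p.1 then (1:ℕ) else 0)
      = ∑ p ∈ S, (if c (F p).2 < c (F p).1 then (1:ℕ) else 0) := by
    refine Finset.sum_nbij' F F hmapS hmapS ?_ ?_ ?_
    · intro a ha; exact hFF a (Finset.mem_filter.mp ha).2
    · intro a ha; exact hFF a (Finset.mem_filter.mp ha).2
    · intro a ha; rw [hFF a (Finset.mem_filter.mp ha).2]
  have hpt : ∀ p ∈ S, (if b p.2 < b p.1 then (1:ℕ) else 0)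
      ≤ (if c (F p).2 < c (F p).1 then (1:ℕ) else 0) := by
    intro p hp
    have hlt : p.1 < p.2 := (Finset.mem_filter.mp hp).2
    by_cases hcnd : p.1 < P ∨ Q < p.2
    · have h2 : F p = (σ p.1, σ p.2) := by rw [hF]; simp [hcnd]
      rw [h2]
      have e : ∀ m : Fin n, c (σ m) = b m := by
        intro m; rw [hconj]; show b (σ (σ m)) = b m; rw [hσσ]
      rw [e, e]
    · push_neg at hcnd
      obtain ⟨hc1, hc2⟩ := hcnd
      have h2 : F p = p := by rw [hF]; simp only [ite_eq_right_iff]; intro hh; omega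
      rw [h2]
      have cval : ∀ m : Fin n, c m = Equiv.swap x y (b m) := fun m => rfl
      rcases eq_or_ne p.1 P with he1 | n1
      · rcases eq_or_ne p.2 Q with he2 | n2
        · rw [he1, he2, hbP, hbQ]
          have : ¬ (y < x) := by omega
          simp [this]
        · have hb2x : b p.2 ≠ x := by
            rw [← hbP]; intro hh; have := b.injective hh; omega
          have hb2y : b p.2 ≠ y := by
            rw [← hbQ]; intro hh; exact absurd (b.injective hh) n2
          rw [cval, cval, he1, hbP, Equiv.swap_apply_left,
            Equiv.swap_apply_of_ne_of_ne hb2x hb2y]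
          split_ifs with u1 u2 <;> omega
      · rcases eq_or_ne p.2 Q with he2 | n2
        · have n1' : p.1 ≠ Q := by omega
          have hb1x : b p.1 ≠ x := by
            rw [← hbP]; intro hh; exact absurd (b.injective hh) n1
          have hb1y : b p.1 ≠ y := by
            rw [← hbQ]; intro hh; exact absurd (b.injective hh) n1'
          rw [cval, cval, he2, hbQ, Equiv.swap_apply_right,
            Equiv.swap_apply_of_ne_of_ne hb1x hb1y]
          split_ifs with u1 u2 <;> omega
        · have n1' : p.1 ≠ Q := by omega
          have n2' : p.2 ≠ P := by omega
          have hb1x : b p.1 ≠ x := by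
            rw [← hbP]; intro hh; exact absurd (b.injective hh) n1
          have hb1y : b p.1 ≠ y := by
            rw [← hbQ]; intro hh; exact absurd (b.injective hh) n1'
          have hb2x : b p.2 ≠ x := by
            rw [← hbP]; intro hh; exact absurd (b.injective hh) n2'
          have hb2y : b p.2 ≠ y := by
            rw [← hbQ]; intro hh; exact absurd (b.injective hh) n2
          rw [cval, cval, Equiv.swap_apply_of_ne_of_ne hb1x hb1y,
            Equiv.swap_apply_of_ne_of_ne hb2x hb2y]
  have hstrict : ∃ p ∈ S, (if b p.2 < b p.1 then (1:ℕ) else 0)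
      < (if c (F p).2 < c (F p).1 then (1:ℕ) else 0) := by
    refine ⟨(P, Q), ?_, ?_⟩
    · rw [hS, Finset.mem_filter]; exact ⟨Finset.mem_univ _, hPQ⟩
    · have h2 : F (P, Q) = (P, Q) := by rw [hF]; simp
      rw [h2]
      have cval : ∀ m : Fin n, c m = Equiv.swap x y (b m) := fun m => rfl
      have cP : c P = y := by rw [cval, hbP]; exact Equiv.swap_apply_left x y
      have cQ : c Q = x := by rw [cval, hbQ]; exact Equiv.swap_apply_right x y
      rw [hbP, hbQ, cP, cQ]
      have h1 : ¬ (y < x) := by omega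
      simp [h1, hxy]
  calc invLen b = ∑ p ∈ S, (if b p.2 < b p.1 then (1:ℕ) else 0) := invLen_eq_sum b
    _ < ∑ p ∈ S, (if c (F p).2 < c (F p).1 then (1:ℕ) else 0) :=
        Finset.sum_lt_sum hpt hstrict
    _ = ∑ p ∈ S, (if c p.2 < c p.1 then (1:ℕ) else 0) := hre.symm
    _ = invLen c := (invLen_eq_sum c).symm

lemma invLen_swap_mul_lt {n : ℕ} (b : Equiv.Perm (Fin n)) (x y : Fin n)
    (hxy : x < y) (hpos : b⁻¹ y < b⁻¹ x) :
    invLen (Equiv.swap x y * b) < invLen b := by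
  have h1 : (Equiv.swap x y * b)⁻¹ x < (Equiv.swap x y * b)⁻¹ y := by
    have e : (Equiv.swap x y * b)⁻¹ = b⁻¹ * Equiv.swap x y := by
      rw [mul_inv_rev, Equiv.swap_inv]
    rw [e]
    show b⁻¹ (Equiv.swap x y x) < b⁻¹ (Equiv.swap x y y)
    rw [Equiv.swap_apply_left, Equiv.swap_apply_right]
    exact hpos
  have h2 := invLen_lt_swap_mul (Equiv.swap x y * b) x y hxy h1
  rwa [Equiv.swap_mul_self_mul] at h2

lemma sT_eq {n : ℕ} {m : ℕ} (h : m + 1 < n) :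
    sT n m = Equiv.swap ⟨m, Nat.lt_of_succ_lt h⟩ ⟨m + 1, h⟩ := dif_pos h

lemma minRep_iff {n i : ℕ} (w : Equiv.Perm (Fin n)) :
    w ∈ minRep n i ↔ ∀ m : ℕ, ∀ h : m + 1 < n, m + 1 ≠ i →
      w ⟨m, Nat.lt_of_succ_lt h⟩ < w ⟨m + 1, h⟩ := by
  constructor
  · intro hw m h hne
    set a : Fin n := ⟨m, Nat.lt_of_succ_lt h⟩ with ha
    set a' : Fin n := ⟨m + 1, h⟩ with ha'
    by_contra hcon
    push_neg at hcon
    have hne2 : w a' ≠ w a := fun hh => by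
      have h2 := w.injective hh
      rw [ha, ha', Fin.mk.injEq] at h2
      omega
    have hlt : w a' < w a := lt_of_le_of_ne hcon hne2
    have e1 : w * sT n m = Equiv.swap (w a) (w a') * w := by
      rw [sT_eq h]; exact Equiv.mul_swap_eq_swap_mul w _ _
    have hp : w⁻¹ (w a) < w⁻¹ (w a') := by
      rw [Equiv.Perm.inv_apply_self, Equiv.Perm.inv_apply_self, ha, ha', Fin.mk_lt_mk]
      omega
    have h3 : invLen (Equiv.swap (w a') (w a) * w) < invLen w :=
      invLen_swap_mul_lt w (w a') (w a) hlt hp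
    rw [Equiv.swap_comm] at h3
    rw [← e1] at h3
    exact absurd (hw m h hne) (by omega)
  · intro hmono m h hne
    set a : Fin n := ⟨m, Nat.lt_of_succ_lt h⟩ with ha
    set a' : Fin n := ⟨m + 1, h⟩ with ha'
    have e1 : w * sT n m = Equiv.swap (w a) (w a') * w := by
      rw [sT_eq h]; exact Equiv.mul_swap_eq_swap_mul w _ _
    rw [e1]
    apply invLen_lt_swap_mul w (w a) (w a') (hmono m h hne)
    rw [Equiv.Perm.inv_apply_self, Equiv.Perm.inv_apply_self, ha, ha', Fin.mk_lt_mk]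
    omega

lemma minRep_mono {n i : ℕ} (w : Equiv.Perm (Fin n)) (hw : w ∈ minRep n i) :
    ∀ q p : ℕ, ∀ hq : q < n, ∀ hpq : p < q, (q < i ∨ i ≤ p) →
      w ⟨p, by omega⟩ < w ⟨q, hq⟩ := by
  rw [minRep_iff] at hw
  intro q
  induction q with
  | zero => intro p hq hpq; omega
  | succ q ih =>
    intro p hq hpq hblock
    have hne : q + 1 ≠ i := by omega
    rcases eq_or_lt_of_le (Nat.lt_succ_iff.mp hpq) with he | hlt
    · subst he
      exact hw p hq hne
    · have h1 : q < n := by omega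
      calc w ⟨p, by omega⟩ < w ⟨q, Nat.lt_of_succ_lt hq⟩ := ih p h1 hlt (by omega)
        _ < w ⟨q + 1, hq⟩ := hw q hq hne

def cnt (i : ℕ) {n : ℕ} (w : Equiv.Perm (Fin n)) (j : ℕ) : ℕ :=
  (Finset.univ.filter fun k : Fin n => (k : ℕ) < j ∧ ((w⁻¹ k : Fin n) : ℕ) < i).card

lemma cnt_zero {n i : ℕ} (w : Equiv.Perm (Fin n)) : cnt i w 0 = 0 := by
  simp [cnt]

lemma cnt_succ {n i : ℕ} (w : Equiv.Perm (Fin n)) (j : ℕ) :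
    cnt i w (j + 1) = cnt i w j +
      (if h : j < n then (if ((w⁻¹ ⟨j, h⟩ : Fin n) : ℕ) < i then 1 else 0) else 0) := by
  rw [cnt, cnt, Finset.card_filter, Finset.card_filter]
  have key : ∀ k : Fin n,
      (if ((k : ℕ) < j + 1 ∧ ((w⁻¹ k : Fin n) : ℕ) < i) then (1:ℕ) else 0)
      = (if ((k : ℕ) < j ∧ ((w⁻¹ k : Fin n) : ℕ) < i) then 1 else 0)
      + (if ((k : ℕ) = j ∧ ((w⁻¹ k : Fin n) : ℕ) < i) then 1 else 0) := by
    intro k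
    by_cases hP : ((w⁻¹ k : Fin n) : ℕ) < i <;> simp [hP] <;> split_ifs <;> omega
  rw [Finset.sum_congr rfl (fun k _ => key k), Finset.sum_add_distrib]
  congr 1
  by_cases h : j < n
  · rw [dif_pos h]
    rw [Finset.sum_eq_single_of_mem (⟨j, h⟩ : Fin n) (Finset.mem_univ _)]
    · simp
    · intro k _ hk
      rw [if_neg]
      rintro ⟨h1, -⟩
      exact hk (Fin.ext h1)
  · rw [dif_neg h]
    apply Finset.sum_eq_zero
    intro k _
    rw [if_neg]
    rintro ⟨h1, -⟩
    omega
lemma cnt_le_succ {n i : ℕ} (w : Equiv.Perm (Fin n)) (j : ℕ) :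
    cnt i w j ≤ cnt i w (j + 1) := by
  rw [cnt_succ]; omega

lemma cnt_mono {n i : ℕ} (w : Equiv.Perm (Fin n)) {j j' : ℕ} (h : j ≤ j') :
    cnt i w j ≤ cnt i w j' := by
  induction j' with
  | zero =>
    have hj : j = 0 := by omega
    subst hj; exact le_refl _
  | succ m ih =>
    rcases Nat.lt_succ_iff_lt_or_eq.mp (Nat.lt_succ_of_le h) with h1 | h1
    · exact le_trans (ih (by omega)) (cnt_le_succ w m)
    · subst h1; exact le_refl _

lemma card_filter_lt {n j : ℕ} (h : j ≤ n) :
    (Finset.univ.filter fun k : Fin n => (k : ℕ) < j).card = j := by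
  rcases eq_or_lt_of_le h with rfl | h2
  · rw [Finset.filter_true_of_mem (fun k _ => k.2), Finset.card_univ, Fintype.card_fin]
  · have : (Finset.univ.filter fun k : Fin n => (k : ℕ) < j) = Finset.Iio ⟨j, h2⟩ := by
      ext k
      simp [Fin.lt_def]
    rw [this, Fin.card_Iio]

lemma cnt_of_ge {n i : ℕ} (hi : i ≤ n) (w : Equiv.Perm (Fin n)) {j : ℕ} (h : n ≤ j) :
    cnt i w j = i := by
  rw [cnt]
  have e1 : (Finset.univ.filter fun k : Fin n => (k : ℕ) < j ∧ ((w⁻¹ k : Fin n) : ℕ) < i)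
      = Finset.univ.filter fun k : Fin n => ((w⁻¹ k : Fin n) : ℕ) < i := by
    apply Finset.filter_congr
    intro k _
    have : (k : ℕ) < j := by omega
    simp [this]
  rw [e1]
  have e2 : (Finset.univ.filter fun k : Fin n => ((w⁻¹ k : Fin n) : ℕ) < i)
      = Finset.image w (Finset.univ.filter fun k : Fin n => (k : ℕ) < i) := by
    ext z
    simp only [Finset.mem_image, Finset.mem_filter, Finset.mem_univ, true_and]
    constructor
    · intro hz
      exact ⟨w⁻¹ z, hz, Equiv.Perm.apply_inv_self w z⟩
    · rintro ⟨a, ha, rfl⟩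
      rwa [Equiv.Perm.inv_apply_self]
  rw [e2, Finset.card_image_of_injective _ w.injective, card_filter_lt hi]

lemma cnt_succ' {n i : ℕ} (w : Equiv.Perm (Fin n)) (k : Fin n) :
    cnt i w ((k : ℕ) + 1) = cnt i w (k : ℕ) +
      (if ((w⁻¹ k : Fin n) : ℕ) < i then 1 else 0) := by
  rw [cnt_succ, dif_pos k.2]

lemma swap_mul_inv_apply {n : ℕ} (a : Equiv.Perm (Fin n)) (x y k : Fin n) :
    (Equiv.swap x y * a)⁻¹ k = a⁻¹ (Equiv.swap x y k) := by
  rw [mul_inv_rev, Equiv.swap_inv]; rfl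

lemma cnt_swap {n i : ℕ} (a : Equiv.Perm (Fin n)) (x y : Fin n) (hne : x ≠ y)
    (hx : ((a⁻¹ x : Fin n) : ℕ) < i) (hy : ¬ ((a⁻¹ y : Fin n) : ℕ) < i) (j : ℕ) :
    cnt i (Equiv.swap x y * a) j + (if (x : ℕ) < j then 1 else 0)
      = cnt i a j + (if (y : ℕ) < j then 1 else 0) := by
  set b := Equiv.swap x y * a with hb
  have hbinv : ∀ k : Fin n, b⁻¹ k = a⁻¹ (Equiv.swap x y k) := swap_mul_inv_apply a x y
  rw [cnt, cnt, Finset.card_filter, Finset.card_filter]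
  set fb : Fin n → ℕ := fun k => if ((k : ℕ) < j ∧ ((b⁻¹ k : Fin n) : ℕ) < i) then 1 else 0 with hfb
  set fa : Fin n → ℕ := fun k => if ((k : ℕ) < j ∧ ((a⁻¹ k : Fin n) : ℕ) < i) then 1 else 0 with hfa
  have hyx : y ∈ Finset.univ.erase x := Finset.mem_erase.mpr ⟨hne.symm, Finset.mem_univ _⟩
  have splitb : ∑ k, fb k = fb x + (fb y + ∑ k ∈ (Finset.univ.erase x).erase y, fb k) := by
    rw [Finset.add_sum_erase _ fb hyx, Finset.add_sum_erase _ fb (Finset.mem_univ x)]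
  have splita : ∑ k, fa k = fa x + (fa y + ∑ k ∈ (Finset.univ.erase x).erase y, fa k) := by
    rw [Finset.add_sum_erase _ fa hyx, Finset.add_sum_erase _ fa (Finset.mem_univ x)]
  have hrest : ∑ k ∈ (Finset.univ.erase x).erase y, fb k
      = ∑ k ∈ (Finset.univ.erase x).erase y, fa k := by
    apply Finset.sum_congr rfl
    intro k hk
    have hk1 : k ≠ y := (Finset.mem_erase.mp hk).1
    have hk2 : k ≠ x := (Finset.mem_erase.mp (Finset.mem_erase.mp hk).2).1
    rw [hfb, hfa]
    simp only []
    rw [hbinv, Equiv.swap_apply_of_ne_of_ne hk2 hk1]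
  have hbx : fb x = 0 := by
    rw [hfb]; simp only []
    rw [hbinv, Equiv.swap_apply_left, if_neg]
    rintro ⟨-, hh⟩; exact hy hh
  have hby : fb y = (if (y : ℕ) < j then 1 else 0) := by
    rw [hfb]; simp only []
    rw [hbinv, Equiv.swap_apply_right]
    by_cases hh : (y : ℕ) < j <;> simp [-Equiv.Perm.coe_inv, hh, hx]
  have hax : fa x = (if (x : ℕ) < j then 1 else 0) := by
    rw [hfa]; simp only []
    by_cases hh : (x : ℕ) < j <;> simp [-Equiv.Perm.coe_inv, hh, hx]
  have hay : fa y = 0 := by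
    rw [hfa]; simp only []
    rw [if_neg]; rintro ⟨-, hh⟩; exact hy hh
  rw [splitb, splita, hrest, hbx, hby, hax, hay]
  omega

lemma cnt_le_of_step_aux {n i : ℕ} (a : Equiv.Perm (Fin n)) (x y : Fin n)
    (hxy : x < y) (hlen : invLen a < invLen (Equiv.swap x y * a)) (j : ℕ) :
    cnt i (Equiv.swap x y * a) j ≤ cnt i a j := by
  by_cases mx : ((a⁻¹ x : Fin n) : ℕ) < i
  · by_cases my : ((a⁻¹ y : Fin n) : ℕ) < i
    · apply le_of_eq
      rw [cnt, cnt]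
      congr 1
      apply Finset.filter_congr
      intro k _
      rw [swap_mul_inv_apply]
      rcases eq_or_ne k x with rfl | h1
      · rw [Equiv.swap_apply_left]; simp [-Equiv.Perm.coe_inv, mx, my]
      rcases eq_or_ne k y with rfl | h2
      · rw [Equiv.swap_apply_right]; simp [-Equiv.Perm.coe_inv, mx, my]
      · rw [Equiv.swap_apply_of_ne_of_ne h1 h2]
    · have := cnt_swap a x y (ne_of_lt hxy) mx my j
      have hle : (if (y : ℕ) < j then 1 else 0) ≤ (if (x : ℕ) < j then (1:ℕ) else 0) := by
        split_ifs <;> omega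
      omega
  · by_cases my : ((a⁻¹ y : Fin n) : ℕ) < i
    · exfalso
      have hpos : a⁻¹ y < a⁻¹ x := by
        rw [Fin.lt_def]; omega
      exact absurd (invLen_swap_mul_lt a x y hxy hpos) (by omega)
    · apply le_of_eq
      rw [cnt, cnt]
      congr 1
      apply Finset.filter_congr
      intro k _
      rw [swap_mul_inv_apply]
      rcases eq_or_ne k x with rfl | h1
      · rw [Equiv.swap_apply_left]; simp [-Equiv.Perm.coe_inv, mx, my]
      rcases eq_or_ne k y with rfl | h2
      · rw [Equiv.swap_apply_right]; simp [-Equiv.Perm.coe_inv, mx, my]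
      · rw [Equiv.swap_apply_of_ne_of_ne h1 h2]

lemma cnt_le_of_step {n i : ℕ} {a c : Equiv.Perm (Fin n)}
    (h : (∃ x y : Fin n, x ≠ y ∧ c = Equiv.swap x y * a) ∧ invLen a < invLen c) :
    ∀ j, cnt i c j ≤ cnt i a j := by
  obtain ⟨⟨x, y, hne, rfl⟩, hlen⟩ := h
  intro j
  rcases lt_or_gt_of_ne hne with hxy | hxy
  · exact cnt_le_of_step_aux a x y hxy hlen j
  · rw [Equiv.swap_comm] at hlen ⊢
    exact cnt_le_of_step_aux a y x hxy hlen j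

lemma cnt_le_of_bruhat {n i : ℕ} {v w : Equiv.Perm (Fin n)} (h : bruhatLE v w) :
    ∀ j, cnt i w j ≤ cnt i v j := by
  induction h with
  | refl => exact fun j => le_refl _
  | tail hab hbc ih => exact fun j => le_trans (cnt_le_of_step hbc j) (ih j)

lemma hgt_eq {n i : ℕ} (w : Equiv.Perm (Fin n)) {j : ℕ} (hj : j ≤ n) :
    hgt i (toPath i w) j = (i : ℤ) + (j : ℤ) - 2 * (cnt i w j : ℤ) := by
  rw [hgt]
  have key : ∀ k ∈ Finset.univ.filter (fun k : Fin n => (k : ℕ) < j),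
      (if toPath i w k then (-1 : ℤ) else 1)
      = 1 - 2 * (if ((w⁻¹ k : Fin n) : ℕ) < i then (1 : ℤ) else 0) := by
    intro k _
    rw [toPath]
    by_cases h : ((w⁻¹ k : Fin n) : ℕ) < i <;> simp [-Equiv.Perm.coe_inv, h]
  rw [Finset.sum_congr rfl key, Finset.sum_sub_distrib, Finset.sum_const,
    card_filter_lt hj, ← Finset.mul_sum]
  have e2 : ∑ k ∈ Finset.univ.filter (fun k : Fin n => (k : ℕ) < j),
      (if ((w⁻¹ k : Fin n) : ℕ) < i then (1 : ℤ) else 0) = (cnt i w j : ℤ) := by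
    rw [cnt, Finset.card_filter, Finset.sum_filter]
    push_cast
    apply Finset.sum_congr rfl
    intro k _
    by_cases h1 : (k : ℕ) < j <;> by_cases h2 : ((w⁻¹ k : Fin n) : ℕ) < i <;>
      simp [h1, h2]
  rw [e2]
  push_cast
  ring

lemma minRep_ext {n i : ℕ} (hi2 : i < n) (v w : Equiv.Perm (Fin n))
    (hv : v ∈ minRep n i) (hw : w ∈ minRep n i)
    (hmem : ∀ k : Fin n, (((v⁻¹ k : Fin n) : ℕ) < i ↔ ((w⁻¹ k : Fin n) : ℕ) < i)) :
    v = w := by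
  set S : Finset (Fin n) := Finset.univ.filter (fun k => ((v⁻¹ k : Fin n) : ℕ) < i) with hS
  set fv : Fin i → Fin n := fun m => v ⟨(m : ℕ), by omega⟩ with hfv
  set fw : Fin i → Fin n := fun m => w ⟨(m : ℕ), by omega⟩ with hfw
  have hmonov : StrictMono fv := by
    intro m m' hm
    exact minRep_mono v hv (m' : ℕ) (m : ℕ) (by omega) hm (Or.inl m'.2)
  have hmonow : StrictMono fw := by
    intro m m' hm
    exact minRep_mono w hw (m' : ℕ) (m : ℕ) (by omega) hm (Or.inl m'.2)
  have hmemv : ∀ m : Fin i, fv m ∈ S := by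
    intro m
    rw [hS, Finset.mem_filter]
    refine ⟨Finset.mem_univ _, ?_⟩
    rw [hfv]; simp only []
    rw [Equiv.Perm.inv_apply_self]
    exact m.2
  have hmemw : ∀ m : Fin i, fw m ∈ S := by
    intro m
    rw [hS, Finset.mem_filter]
    refine ⟨Finset.mem_univ _, ?_⟩
    rw [hmem]
    rw [hfw]; simp only []
    rw [Equiv.Perm.inv_apply_self]
    exact m.2
  have hSim : S = Finset.image fv Finset.univ := by
    ext z
    rw [hS, Finset.mem_filter, Finset.mem_image]
    constructor
    · rintro ⟨-, hz⟩
      refine ⟨⟨((v⁻¹ z : Fin n) : ℕ), hz⟩, Finset.mem_univ _, ?_⟩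
      rw [hfv]; simp only []
      have : (⟨((v⁻¹ z : Fin n) : ℕ), (v⁻¹ z).2⟩ : Fin n) = v⁻¹ z := Fin.eta _ _
      rw [this, Equiv.Perm.apply_inv_self]
    · rintro ⟨m, -, rfl⟩
      exact Finset.mem_filter.mp (hmemv m)
  have hcard : S.card = i := by
    rw [hSim, Finset.card_image_of_injective _ hmonov.injective, Finset.card_univ,
      Fintype.card_fin]
  have hev : fv = ⇑(S.orderEmbOfFin hcard) := Finset.orderEmbOfFin_unique hcard hmemv hmonov
  have hew : fw = ⇑(S.orderEmbOfFin hcard) := Finset.orderEmbOfFin_unique hcard hmemw hmonow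
  -- second block
  set gv : Fin (n - i) → Fin n := fun m => v ⟨i + (m : ℕ), by omega⟩ with hgv
  set gw : Fin (n - i) → Fin n := fun m => w ⟨i + (m : ℕ), by omega⟩ with hgw
  set T : Finset (Fin n) := Finset.univ.filter (fun k => ¬ ((v⁻¹ k : Fin n) : ℕ) < i) with hT
  have hmonogv : StrictMono gv := by
    intro m m' hm
    exact minRep_mono v hv (i + (m' : ℕ)) (i + (m : ℕ)) (by omega) (by omega)
      (Or.inr (by omega))
  have hmonogw : StrictMono gw := by
    intro m m' hm
    exact minRep_mono w hw (i + (m' : ℕ)) (i + (m : ℕ)) (by omega) (by omega)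
      (Or.inr (by omega))
  have hmemgv : ∀ m : Fin (n - i), gv m ∈ T := by
    intro m
    rw [hT, Finset.mem_filter]
    refine ⟨Finset.mem_univ _, ?_⟩
    rw [hgv]; simp only []
    rw [Equiv.Perm.inv_apply_self]
    simp only [Fin.val_mk]
    omega
  have hmemgw : ∀ m : Fin (n - i), gw m ∈ T := by
    intro m
    rw [hT, Finset.mem_filter]
    refine ⟨Finset.mem_univ _, ?_⟩
    rw [hmem]
    rw [hgw]; simp only []
    rw [Equiv.Perm.inv_apply_self]
    simp only [Fin.val_mk]
    omega
  have hTim : T = Finset.image gv Finset.univ := by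
    ext z
    rw [hT, Finset.mem_filter, Finset.mem_image]
    constructor
    · rintro ⟨-, hz⟩
      refine ⟨⟨((v⁻¹ z : Fin n) : ℕ) - i, by omega⟩, Finset.mem_univ _, ?_⟩
      rw [hgv]; simp only []
      have : (⟨i + (((v⁻¹ z : Fin n) : ℕ) - i), by omega⟩ : Fin n) = v⁻¹ z :=
        Fin.ext (by simp [-Equiv.Perm.coe_inv]; omega)
      rw [this, Equiv.Perm.apply_inv_self]
    · rintro ⟨m, -, rfl⟩
      exact Finset.mem_filter.mp (hmemgv m)
  have hcardT : T.card = n - i := by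
    rw [hTim, Finset.card_image_of_injective _ hmonogv.injective, Finset.card_univ,
      Fintype.card_fin]
  have hegv : gv = ⇑(T.orderEmbOfFin hcardT) :=
    Finset.orderEmbOfFin_unique hcardT hmemgv hmonogv
  have hegw : gw = ⇑(T.orderEmbOfFin hcardT) :=
    Finset.orderEmbOfFin_unique hcardT hmemgw hmonogw
  -- conclude
  apply Equiv.ext
  intro m
  by_cases hm : (m : ℕ) < i
  · have e1 : v m = fv ⟨(m : ℕ), hm⟩ := by rw [hfv]
    have e2 : w m = fw ⟨(m : ℕ), hm⟩ := by rw [hfw]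
    rw [e1, e2, hev, hew]
  · have hmm : (⟨i + ((m : ℕ) - i), by omega⟩ : Fin n) = m := Fin.ext (by simp; omega)
    have e1 : v m = gv ⟨(m : ℕ) - i, by omega⟩ := by rw [hgv]; simp only []; rw [hmm]
    have e2 : w m = gw ⟨(m : ℕ) - i, by omega⟩ := by rw [hgw]; simp only []; rw [hmm]
    rw [e1, e2, hegv, hegw]

lemma swap_adj_lt {n : ℕ} (x' y : Fin n) (hadj : (y : ℕ) = (x' : ℕ) + 1)
    (a b : Fin n) (hab : a < b) (hnot : ¬ (a = x' ∧ b = y)) :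
    Equiv.swap x' y a < Equiv.swap x' y b := by
  have hval : ∀ z : Fin n, ((Equiv.swap x' y z : Fin n) : ℕ)
      = if z = x' then (y : ℕ) else if z = y then (x' : ℕ) else (z : ℕ) := by
    intro z
    rw [Equiv.swap_apply_def]
    split_ifs <;> rfl
  rw [Fin.lt_def, hval, hval]
  rw [Fin.lt_def] at hab
  by_cases hax : a = x'
  · have hb : b ≠ y := fun hh => hnot ⟨hax, hh⟩
    subst hax
    split_ifs <;> omega
  · split_ifs <;> omega

lemma reach {n i : ℕ} (hi1 : 1 ≤ i) (hi2 : i < n) :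
    ∀ N : ℕ, ∀ v w : Equiv.Perm (Fin n), invLen w ≤ N → v ∈ minRep n i → w ∈ minRep n i →
      (∀ j ≤ n, cnt i w j ≤ cnt i v j) → bruhatLE v w := by
  intro N
  induction N using Nat.strong_induction_on with
  | _ N ih =>
    intro v w hN hv hw hcnt
    by_cases hall : ∀ j, j ≤ n → cnt i v j = cnt i w j
    · have hmem : ∀ k : Fin n, (((v⁻¹ k : Fin n) : ℕ) < i ↔ ((w⁻¹ k : Fin n) : ℕ) < i) := by
        intro k
        have h1 := hall (k : ℕ) (by omega)
        have h2 := hall ((k : ℕ) + 1) (by omega)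
        have h3 := cnt_succ' (i := i) v k
        have h4 := cnt_succ' (i := i) w k
        by_cases p1 : ((v⁻¹ k : Fin n) : ℕ) < i <;>
          by_cases p2 : ((w⁻¹ k : Fin n) : ℕ) < i <;>
          simp [-Equiv.Perm.coe_inv, p1, p2] at h3 h4 ⊢ <;> omega
      rw [minRep_ext hi2 v w hv hw hmem]
      exact Relation.ReflTransGen.refl
    · push_neg at hall
      obtain ⟨j0, hj0n, hj0ne⟩ := hall
      have hd0 : cnt i w j0 < cnt i v j0 :=
        lt_of_le_of_ne (hcnt j0 hj0n) (fun hh => hj0ne hh.symm)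
      have hex : ∃ j, cnt i w j < cnt i v j := ⟨j0, hd0⟩
      set js := Nat.find hex with hjs
      have hjsP : cnt i w js < cnt i v js := Nat.find_spec hex
      have hjsmin : ∀ m, m < js → ¬ (cnt i w m < cnt i v m) := fun m hm => Nat.find_min hex hm
      have hjsn : js ≤ n := by
        by_contra hcon
        push_neg at hcon
        rw [cnt_of_ge (le_of_lt hi2) w (by omega), cnt_of_ge (le_of_lt hi2) v (by omega)] at hjsP
        omega
      have hjs1 : 1 ≤ js := by
        rcases Nat.eq_zero_or_pos js with h0 | h1
        · rw [h0, cnt_zero, cnt_zero] at hjsP; omega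
        · exact h1
      have hYex : ∃ m : Fin n, js ≤ (m : ℕ) ∧ ((w⁻¹ m : Fin n) : ℕ) < i := by
        by_contra hcon
        push_neg at hcon
        have hconst : ∀ m, js ≤ m → m ≤ n → cnt i w m = cnt i w js := by
          intro m
          induction m with
          | zero =>
            intro h1 _
            have h0 : js = 0 := Nat.le_zero.mp h1
            rw [h0]
          | succ m ihm =>
            intro h1 h2
            rcases eq_or_lt_of_le h1 with he | hlt
            · rw [← he]
            · have hm : m < n := by omega
              have h3 := cnt_succ' (i := i) w ⟨m, hm⟩
              have e : ((⟨m, hm⟩ : Fin n) : ℕ) = m := rfl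
              rw [e] at h3
              have hP : ¬ ((w⁻¹ (⟨m, hm⟩ : Fin n) : Fin n) : ℕ) < i := by
                intro hc
                have := hcon ⟨m, hm⟩
                rw [e] at this
                omega
              rw [if_neg hP, Nat.add_zero] at h3
              rw [h3]
              exact ihm (by omega) (by omega)
        have h1 : cnt i w n = cnt i w js := hconst n hjsn (le_refl n)
        have h2 : cnt i v js ≤ cnt i v n := cnt_mono v hjsn
        rw [cnt_of_ge (le_of_lt hi2) w (le_refl n)] at h1
        rw [cnt_of_ge (le_of_lt hi2) v (le_refl n)] at h2
        omega
      set Y : Finset (Fin n) := Finset.univ.filter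
        (fun m : Fin n => js ≤ (m : ℕ) ∧ ((w⁻¹ m : Fin n) : ℕ) < i) with hY
      have hYne : Y.Nonempty := by
        obtain ⟨m, hm1, hm2⟩ := hYex
        exact ⟨m, by rw [hY, Finset.mem_filter]; exact ⟨Finset.mem_univ _, hm1, hm2⟩⟩
      set y : Fin n := Y.min' hYne with hy
      have hyY : y ∈ Y := Finset.min'_mem Y hYne
      have hymin : ∀ m ∈ Y, y ≤ m := fun m hm => Finset.min'_le Y m hm
      rw [hY, Finset.mem_filter] at hyY
      obtain ⟨-, hyjs, hyB⟩ := hyY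
      have hy1 : 1 ≤ (y : ℕ) := by omega
      set x' : Fin n := ⟨(y : ℕ) - 1, by omega⟩ with hx'
      have hadj : (y : ℕ) = (x' : ℕ) + 1 := by
        have : (x' : ℕ) = (y : ℕ) - 1 := rfl
        omega
      have hxB : ¬ ((w⁻¹ x' : Fin n) : ℕ) < i := by
        intro hcon
        rcases le_or_gt js ((x' : ℕ)) with hc | hc
        · have hmem2 : x' ∈ Y := by
            rw [hY, Finset.mem_filter]; exact ⟨Finset.mem_univ _, hc, hcon⟩
          have := hymin x' hmem2
          rw [Fin.le_def] at this
          omega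
        · have heq : cnt i w ((x' : ℕ)) = cnt i v ((x' : ℕ)) := by
            have h1 := hjsmin ((x' : ℕ)) (by omega)
            have h2 := hcnt ((x' : ℕ)) (by omega)
            omega
          have h3 := cnt_succ' (i := i) v x'
          have h4 := cnt_succ' (i := i) w x'
          rw [if_pos hcon] at h4
          have h5 : (x' : ℕ) + 1 = js := by omega
          rw [h5] at h3 h4
          split_ifs at h3 <;> omega
      have hdy : cnt i w (y : ℕ) < cnt i v (y : ℕ) := by
        have claim : ∀ m, js ≤ m → m ≤ (y : ℕ) → cnt i w m < cnt i v m := by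
          intro m
          induction m with
          | zero =>
            intro h1 _
            exact absurd h1 (by omega)
          | succ m ihm =>
            intro h1 h2
            rcases eq_or_lt_of_le h1 with he | hlt
            · rw [← he]; exact hjsP
            · have hm : m < n := by omega
              have hPw : ¬ ((w⁻¹ (⟨m, hm⟩ : Fin n) : Fin n) : ℕ) < i := by
                intro hc
                have hmem3 : (⟨m, hm⟩ : Fin n) ∈ Y := by
                  rw [hY, Finset.mem_filter]
                  refine ⟨Finset.mem_univ _, ?_, hc⟩
                  show js ≤ m
                  omega
                have := hymin _ hmem3
                rw [Fin.le_def] at this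
                have e : ((⟨m, hm⟩ : Fin n) : ℕ) = m := rfl
                rw [e] at this
                omega
              have h3 := cnt_succ' (i := i) w ⟨m, hm⟩
              have h4 := cnt_succ' (i := i) v ⟨m, hm⟩
              have e : ((⟨m, hm⟩ : Fin n) : ℕ) = m := rfl
              rw [e] at h3 h4
              rw [if_neg hPw, Nat.add_zero] at h3
              have h5 := ihm (by omega) (by omega)
              split_ifs at h4 <;> omega
        exact claim (y : ℕ) hyjs (le_refl _)
      have hx'ne : x' ≠ y := by
        intro hh
        rw [hh] at hadj
        omega
      set w' := Equiv.swap x' y * w with hw'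
      have hx'lty : x' < y := by rw [Fin.lt_def]; omega
      have hlen : invLen w' < invLen w := by
        apply invLen_swap_mul_lt w x' y hx'lty
        rw [Fin.lt_def]
        omega
      have hww' : w = Equiv.swap x' y * w' := by
        rw [hw', Equiv.swap_mul_self_mul]
      have hw'min : w' ∈ minRep n i := by
        rw [minRep_iff]
        intro m h hne
        have hwlt := (minRep_iff w).mp hw m h hne
        have e1 : w' ⟨m, Nat.lt_of_succ_lt h⟩
            = Equiv.swap x' y (w ⟨m, Nat.lt_of_succ_lt h⟩) := rfl
        have e2 : w' ⟨m + 1, h⟩ = Equiv.swap x' y (w ⟨m + 1, h⟩) := rfl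
        rw [e1, e2]
        apply swap_adj_lt x' y hadj _ _ hwlt
        rintro ⟨ha, hb⟩
        have hxa : w⁻¹ x' = ⟨m, Nat.lt_of_succ_lt h⟩ := by
          rw [← ha, Equiv.Perm.inv_apply_self]
        have hyb : w⁻¹ y = ⟨m + 1, h⟩ := by
          rw [← hb, Equiv.Perm.inv_apply_self]
        rw [hxa] at hxB
        rw [hyb] at hyB
        have e3 : ((⟨m, Nat.lt_of_succ_lt h⟩ : Fin n) : ℕ) = m := rfl
        have e4 : ((⟨m + 1, h⟩ : Fin n) : ℕ) = m + 1 := rfl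
        rw [e3] at hxB
        rw [e4] at hyB
        omega
      have hcnt' : ∀ j, j ≤ n → cnt i w' j ≤ cnt i v j := by
        intro j hj
        have hsw := cnt_swap w y x' hx'ne.symm hyB hxB j
        rw [Equiv.swap_comm] at hsw
        rw [← hw'] at hsw
        have h1 := hcnt j hj
        by_cases hjy : j = (y : ℕ)
        · subst hjy
          split_ifs at hsw <;> omega
        · split_ifs at hsw <;> omega
      have hstep : bruhatLE v w' := ih (invLen w') (by omega) v w' (le_refl _) hv hw'min hcnt'
      exact Relation.ReflTransGen.tail hstep ⟨⟨x', y, hx'ne, hww'⟩, by omega⟩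

/-- Bruhat order on `W^I` is equivalent to comparison of path heights. -/
theorem bruhat_iff_heights (n i : ℕ) (hi1 : 1 ≤ i) (hi2 : i < n)
    (v w : Equiv.Perm (Fin n)) (hv : v ∈ minRep n i) (hw : w ∈ minRep n i) :
    bruhatLE v w ↔ ∀ j ≤ n, hgt i (toPath i v) j ≤ hgt i (toPath i w) j := by
  constructor
  · intro h j hj
    have hc := cnt_le_of_bruhat (i := i) h j
    rw [hgt_eq v hj, hgt_eq w hj]
    omega
  · intro h
    apply reach hi1 hi2 (invLen w) v w (le_refl _) hv hw
    intro j hj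
    have hh := h j hj
    rw [hgt_eq v hj, hgt_eq w hj] at hh
    omega
end
end

section
/- Let w ∈ W^I ⊆ S_n have a valley at j, with λ^w_a = ⋯ = λ^w_j = ↘ and λ^w_{j+1} = ⋯ = λ^w_b = ↗. Set Ĵ = {s_a,…,s_{b−1}} ∖ {s_j}. Then for every x ∈ W_{[a,b−1]}^{Ĵ} (minimal coset representatives in W_{[a,b−1]}/W_{Ĵ}) one has x·w ∈ W^I and ℓ(x·w) = ℓ(x) + ℓ(w). -/
open scoped Classical

noncomputable section

def InvSet {n : ℕ} (w : Equiv.Perm (Fin n)) : Finset (Fin n × Fin n) :=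
  Finset.univ.filter fun p : Fin n × Fin n => p.1 < p.2 ∧ w p.2 < w p.1

lemma invLen_eq {n : ℕ} (w : Equiv.Perm (Fin n)) : invLen w = (InvSet w).card := rfl

lemma mem_InvSet {n : ℕ} (w : Equiv.Perm (Fin n)) (p : Fin n × Fin n) :
    p ∈ InvSet w ↔ p.1 < p.2 ∧ w p.2 < w p.1 := by
  simp [InvSet]

lemma swap_sorted {n m : ℕ} (h : m + 1 < n) {p q : Fin n} (hpq : p < q)
    (hne : ¬(p = ⟨m, Nat.lt_of_succ_lt h⟩ ∧ q = ⟨m + 1, h⟩)) :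
    Equiv.swap ⟨m, Nat.lt_of_succ_lt h⟩ ⟨m + 1, h⟩ p
      < Equiv.swap ⟨m, Nat.lt_of_succ_lt h⟩ ⟨m + 1, h⟩ q := by
  rw [Equiv.swap_apply_def, Equiv.swap_apply_def]
  have h1 := p.isLt
  have h2 := q.isLt
  rw [Fin.lt_def] at hpq
  simp only [Fin.ext_iff] at hne
  split_ifs with a1 a2 a3 a4 <;>
  · simp only [Fin.ext_iff, Fin.lt_def] at *
    omega

lemma invLen_mul_sT_iff {n : ℕ} (w : Equiv.Perm (Fin n)) {m : ℕ} (h : m + 1 < n) :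
    invLen w < invLen (w * sT n m) ↔ w ⟨m, Nat.lt_of_succ_lt h⟩ < w ⟨m + 1, h⟩ := by
  set pm : Fin n := ⟨m, Nat.lt_of_succ_lt h⟩ with hpm
  set pm1 : Fin n := ⟨m + 1, h⟩ with hpm1
  set s : Equiv.Perm (Fin n) := Equiv.swap pm pm1 with hs
  have hsT : sT n m = s := dif_pos h
  have hplt : pm < pm1 := by simp [hpm, hpm1, Fin.lt_def]
  have key : ∀ p q : Fin n, p < q → (p, q) ≠ (pm, pm1) →
      s p < s q ∧ (s p, s q) ≠ (pm, pm1) := by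
    intro p q hpq hne
    have hne' : ¬(p = pm ∧ q = pm1) := fun ⟨e1, e2⟩ => hne (by rw [e1, e2])
    refine ⟨swap_sorted h hpq hne', ?_⟩
    intro hc
    rw [Prod.mk.injEq] at hc
    obtain ⟨e1, e2⟩ := hc
    have hp : p = pm1 := by
      have := congrArg s e1
      rwa [hs, Equiv.swap_apply_self, Equiv.swap_apply_left] at this
    have hq : q = pm := by
      have := congrArg s e2
      rwa [hs, Equiv.swap_apply_self, Equiv.swap_apply_right] at this
    rw [hp, hq] at hpq
    exact absurd hpq (lt_asymm hplt)
  have hcardA : ((InvSet w).erase (pm, pm1)).card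
      = ((InvSet (w * s)).erase (pm, pm1)).card := by
    apply Finset.card_bij' (fun p _ => (s p.1, s p.2)) (fun p _ => (s p.1, s p.2))
    · rintro ⟨p, q⟩ hp
      rw [Finset.mem_erase, mem_InvSet] at hp
      obtain ⟨hne, hpq, hlt⟩ := hp
      obtain ⟨hs1, hs2⟩ := key p q hpq hne
      rw [Finset.mem_erase, mem_InvSet]
      refine ⟨hs2, hs1, ?_⟩
      show (w * s) (s q) < (w * s) (s p)
      simp only [Equiv.Perm.mul_apply, hs, Equiv.swap_apply_self]
      exact hlt
    · rintro ⟨p, q⟩ hp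
      rw [Finset.mem_erase, mem_InvSet] at hp
      obtain ⟨hne, hpq, hlt⟩ := hp
      obtain ⟨hs1, hs2⟩ := key p q hpq hne
      rw [Finset.mem_erase, mem_InvSet]
      refine ⟨hs2, hs1, ?_⟩
      show w (s q) < w (s p)
      simp only [Equiv.Perm.mul_apply] at hlt
      exact hlt
    · rintro ⟨p, q⟩ _
      simp [hs]
    · rintro ⟨p, q⟩ _
      simp [hs]
  have hwne : w pm ≠ w pm1 := fun hh => absurd (w.injective hh) (ne_of_lt hplt)
  have hmem1 : (pm, pm1) ∈ InvSet w ↔ w pm1 < w pm := by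
    rw [mem_InvSet]; exact ⟨fun hh => hh.2, fun hh => ⟨hplt, hh⟩⟩
  have hmem2 : (pm, pm1) ∈ InvSet (w * s) ↔ w pm < w pm1 := by
    rw [mem_InvSet]
    show pm < pm1 ∧ (w * s) pm1 < (w * s) pm ↔ _
    simp only [Equiv.Perm.mul_apply, hs, Equiv.swap_apply_left, Equiv.swap_apply_right]
    exact ⟨fun hh => hh.2, fun hh => ⟨hplt, hh⟩⟩
  rw [hsT, invLen_eq, invLen_eq]
  by_cases hlt : w pm < w pm1
  · simp only [hlt, iff_true]
    have h1 : ((InvSet w).erase (pm, pm1)).card = (InvSet w).card := by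
      rw [Finset.erase_eq_of_notMem (fun hh => absurd (hmem1.mp hh) (lt_asymm hlt))]
    have h2 : ((InvSet (w * s)).erase (pm, pm1)).card + 1 = (InvSet (w * s)).card :=
      Finset.card_erase_add_one (hmem2.mpr hlt)
    omega
  · simp only [hlt, iff_false, not_lt]
    have hlt' : w pm1 < w pm := by
      rcases lt_trichotomy (w pm) (w pm1) with hh | hh | hh
      · exact absurd hh hlt
      · exact absurd hh hwne
      · exact hh
    have h1 : ((InvSet w).erase (pm, pm1)).card + 1 = (InvSet w).card :=
      Finset.card_erase_add_one (hmem1.mpr hlt')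
    have h2 : ((InvSet (w * s)).erase (pm, pm1)).card = (InvSet (w * s)).card := by
      rw [Finset.erase_eq_of_notMem (fun hh => absurd (hmem2.mp hh) hlt)]
    omega

lemma mem_InvSet' {n : ℕ} (w : Equiv.Perm (Fin n)) (p q : Fin n) :
    (p, q) ∈ InvSet w ↔ p < q ∧ w q < w p := by
  simp [InvSet]

lemma chain_lt {n : ℕ} (x : Equiv.Perm (Fin n)) (lo hi : ℕ)
    (hasc : ∀ m, lo ≤ m → m + 1 ≤ hi → ∀ (hm : m + 1 < n),
      x ⟨m, Nat.lt_of_succ_lt hm⟩ < x ⟨m + 1, hm⟩)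
    {c d : Fin n} (hc : lo ≤ (c : ℕ)) (hcd : (c : ℕ) < (d : ℕ)) (hd : (d : ℕ) ≤ hi) :
    x c < x d := by
  suffices H : ∀ e : ℕ, ∀ (he : e < n), (c : ℕ) < e → e ≤ hi → x c < x ⟨e, he⟩ by
    have := H (d : ℕ) d.isLt hcd hd
    simpa using this
  intro e
  induction e with
  | zero => intro _ h _; omega
  | succ t ih =>
    intro he hce hhi
    have hlot : lo ≤ t := by omega
    have step : x ⟨t, Nat.lt_of_succ_lt he⟩ < x ⟨t + 1, he⟩ := hasc t hlot (by omega) he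
    rcases Nat.lt_or_ge (c : ℕ) t with hlt | hge
    · exact lt_trans (ih (Nat.lt_of_succ_lt he) hlt (by omega)) step
    · have hct : (c : ℕ) = t := by omega
      have hceq : c = ⟨t, Nat.lt_of_succ_lt he⟩ := Fin.ext hct
      rw [hceq]; exact step


/-- with a valley at `j` as above and `Ĵ = [a,b-1] ∖ {j}`, for every minimal
coset representative `x ∈ W_{[a,b-1]}^{Ĵ}` one has `x·w ∈ W^I` and `ℓ(xw) = ℓ(x) + ℓ(w)`. -/
theorem valley_stack (n i : ℕ) (hi1 : 1 ≤ i) (hi2 : i < n)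
    (w : Equiv.Perm (Fin n)) (hw : w ∈ minRep n i)
    (a j b : ℕ) (hab : a ≤ j) (hjb : j < b) (hbn : b < n)
    (hdown : ∀ k (hk : k < n), a ≤ k → k ≤ j → toPath i w ⟨k, hk⟩ = true)
    (hup : ∀ k (hk : k < n), j + 1 ≤ k → k ≤ b → toPath i w ⟨k, hk⟩ = false)
    (x : Equiv.Perm (Fin n))
    (hx : x ∈ Subgroup.closure {g | ∃ m : ℕ, a ≤ m ∧ m < b ∧ g = sT n m})
    (hxmin : ∀ m : ℕ, a ≤ m → m < b → m ≠ j → invLen x < invLen (x * sT n m)) :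
    x * w ∈ minRep n i ∧ invLen (x * w) = invLen x + invLen w := by

  have hw' : ∀ m : ℕ, m + 1 < n → m + 1 ≠ i → invLen w < invLen (w * sT n m) := hw
  have hfixAll : ∀ g ∈ Subgroup.closure {g : Equiv.Perm (Fin n) | ∃ m : ℕ, a ≤ m ∧ m < b ∧ g = sT n m},
      ∀ k : Fin n, ((k : ℕ) < a ∨ b < (k : ℕ)) → g k = k := by
    intro g hg
    refine Subgroup.closure_induction
      (p := fun g _ => ∀ k : Fin n, ((k : ℕ) < a ∨ b < (k : ℕ)) → g k = k)
      ?_ ?_ ?_ ?_ hg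
    · rintro g ⟨m, ham, hmb, rfl⟩ k hk
      rw [sT, dif_pos (by omega : m + 1 < n)]
      apply Equiv.swap_apply_of_ne_of_ne
      · intro hh; rw [Fin.ext_iff] at hh; simp only [] at hh; omega
      · intro hh; rw [Fin.ext_iff] at hh; simp only [] at hh; omega
    · intro k _; rfl
    · intro g g' _ _ hg hg' k hk
      show g (g' k) = k
      rw [hg' k hk, hg k hk]
    · intro g _ hgk k hk
      calc g⁻¹ k = g⁻¹ (g k) := by rw [hgk k hk]
        _ = k := by rw [Equiv.Perm.inv_def, Equiv.symm_apply_apply]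
  have hxfix : ∀ k : Fin n, ((k : ℕ) < a ∨ b < (k : ℕ)) → x k = k := hfixAll x hx
  have hxinvfix : ∀ k : Fin n, ((k : ℕ) < a ∨ b < (k : ℕ)) → x⁻¹ k = k :=
    hfixAll x⁻¹ (inv_mem hx)
  have hxrange : ∀ k : Fin n, a ≤ (k : ℕ) → (k : ℕ) ≤ b → a ≤ ((x k : Fin n) : ℕ) ∧ ((x k : Fin n) : ℕ) ≤ b := by
    intro k h1 h2
    have hout : ¬(((x k : Fin n) : ℕ) < a ∨ b < ((x k : Fin n) : ℕ)) := by
      intro hout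
      have h3 := hxinvfix (x k) hout
      rw [Equiv.Perm.inv_def, Equiv.symm_apply_apply] at h3
      rw [← h3] at hout
      omega
    push_neg at hout
    exact ⟨hout.1, hout.2⟩
  have hxasc : ∀ m, a ≤ m → m + 1 ≤ b → m ≠ j → ∀ (hm : m + 1 < n),
      x ⟨m, Nat.lt_of_succ_lt hm⟩ < x ⟨m + 1, hm⟩ := by
    intro m h1 h2 h3 hm
    exact (invLen_mul_sT_iff x hm).mp (hxmin m h1 (by omega) h3)
  have hchain1 : ∀ c d : Fin n, a ≤ (c : ℕ) → (c : ℕ) < (d : ℕ) → (d : ℕ) ≤ j → x c < x d :=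
    fun c d h1 h2 h3 =>
      chain_lt x a j (fun m hm1 hm2 hm => hxasc m hm1 (by omega) (by omega) hm) h1 h2 h3
  have hchain2 : ∀ c d : Fin n, j + 1 ≤ (c : ℕ) → (c : ℕ) < (d : ℕ) → (d : ℕ) ≤ b → x c < x d :=
    fun c d h1 h2 h3 =>
      chain_lt x (j + 1) b (fun m hm1 hm2 hm => hxasc m (by omega) hm2 (by omega) hm) h1 h2 h3
  have hF1 : ∀ c d : Fin n, c < d → x d < x c →
      ((w⁻¹ c : Fin n) : ℕ) < i ∧ i ≤ ((w⁻¹ d : Fin n) : ℕ) := by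
    intro c d hcd hxdc
    rw [Fin.lt_def] at hcd hxdc
    have hca : a ≤ (c : ℕ) := by
      by_contra hcon
      push_neg at hcon
      have hc' : x c = c := hxfix c (Or.inl hcon)
      rcases Nat.lt_or_ge (d : ℕ) a with hda | hda
      · have hd' : x d = d := hxfix d (Or.inl hda)
        rw [hc', hd'] at hxdc; omega
      · rcases le_or_gt (d : ℕ) b with hdb | hdb
        · have := hxrange d hda hdb
          rw [hc'] at hxdc; omega
        · have hd' : x d = d := hxfix d (Or.inr hdb)
          rw [hc', hd'] at hxdc; omega
    have hcb : (c : ℕ) ≤ b := by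
      by_contra hcon
      push_neg at hcon
      have hc' : x c = c := hxfix c (Or.inr hcon)
      have hd' : x d = d := hxfix d (Or.inr (by omega))
      rw [hc', hd'] at hxdc; omega
    have hdb : (d : ℕ) ≤ b := by
      by_contra hcon
      push_neg at hcon
      have hd' : x d = d := hxfix d (Or.inr hcon)
      have := hxrange c hca hcb
      rw [hd'] at hxdc; omega
    have hcj : (c : ℕ) ≤ j := by
      by_contra hcon
      push_neg at hcon
      have := hchain2 c d (by omega) hcd hdb
      rw [Fin.lt_def] at this; omega
    have hdj : j + 1 ≤ (d : ℕ) := by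
      by_contra hcon
      push_neg at hcon
      have := hchain1 c d hca hcd (by omega)
      rw [Fin.lt_def] at this; omega
    constructor
    · have := hdown (c : ℕ) c.isLt hca hcj
      simp only [toPath, Fin.eta, decide_eq_true_eq] at this
      exact this
    · have := hup (d : ℕ) d.isLt hdj hdb
      simp only [toPath, Fin.eta, decide_eq_false_iff_not, not_lt] at this
      exact this
  set e : Fin n × Fin n → Fin n × Fin n := fun p => (w⁻¹ p.1, w⁻¹ p.2) with he
  have hinj : Function.Injective e := by
    intro p q hpq
    rw [Prod.ext_iff] at hpq ⊢
    exact ⟨w⁻¹.injective hpq.1, w⁻¹.injective hpq.2⟩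
  have hInv : InvSet (x * w) = InvSet w ∪ (InvSet x).image e := by
    ext ⟨p, q⟩
    rw [Finset.mem_union, mem_InvSet', mem_InvSet']
    constructor
    · rintro ⟨hpq, hlt⟩
      simp only [Equiv.Perm.mul_apply] at hlt
      rcases lt_trichotomy (w p) (w q) with hh | hh | hh
      · right
        rw [Finset.mem_image]
        refine ⟨(w p, w q), ?_, ?_⟩
        · rw [mem_InvSet']; exact ⟨hh, hlt⟩
        · show (w⁻¹ (w p), w⁻¹ (w q)) = (p, q)
          simp
      · exact absurd (w.injective hh) (ne_of_lt hpq)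
      · left; exact ⟨hpq, hh⟩
    · intro hmem
      rcases hmem with ⟨hpq, hlt⟩ | hmem
      · refine ⟨hpq, ?_⟩
        simp only [Equiv.Perm.mul_apply]
        rcases lt_trichotomy (x (w q)) (x (w p)) with hh | hh | hh
        · exact hh
        · exact absurd (w.injective (x.injective hh)) (ne_of_lt hpq).symm
        · exfalso
          have hF := hF1 (w q) (w p) hlt hh
          simp only [Equiv.Perm.inv_def, Equiv.symm_apply_apply] at hF
          rw [Fin.lt_def] at hpq
          omega
      · rw [Finset.mem_image] at hmem
        obtain ⟨⟨c, d⟩, hcd, heq⟩ := hmem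
        rw [mem_InvSet'] at hcd
        obtain ⟨hcd1, hcd2⟩ := hcd
        have hF := hF1 c d hcd1 hcd2
        have hp : w⁻¹ c = p := congrArg Prod.fst heq
        have hq : w⁻¹ d = q := congrArg Prod.snd heq
        constructor
        · rw [← hp, ← hq, Fin.lt_def]; omega
        · rw [← hp, ← hq]
          simp only [Equiv.Perm.mul_apply, Equiv.Perm.inv_def, Equiv.apply_symm_apply]
          exact hcd2
  have hdisj : Disjoint (InvSet w) ((InvSet x).image e) := by
    rw [Finset.disjoint_left]
    rintro ⟨p, q⟩ hmem hmem'
    rw [mem_InvSet'] at hmem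
    rw [Finset.mem_image] at hmem'
    obtain ⟨⟨c, d⟩, hcd, heq⟩ := hmem'
    rw [mem_InvSet'] at hcd
    have hp : w⁻¹ c = p := congrArg Prod.fst heq
    have hq : w⁻¹ d = q := congrArg Prod.snd heq
    rw [← hp, ← hq] at hmem
    simp only [Equiv.Perm.inv_def, Equiv.apply_symm_apply] at hmem
    exact absurd hcd.1 (not_lt.mpr (le_of_lt hmem.2))
  have hlen : invLen (x * w) = invLen x + invLen w := by
    rw [invLen_eq, hInv, Finset.card_union_of_disjoint hdisj,
      Finset.card_image_of_injective _ hinj, ← invLen_eq, ← invLen_eq]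
    omega
  refine ⟨?_, hlen⟩
  show ∀ m : ℕ, m + 1 < n → m + 1 ≠ i → invLen (x * w) < invLen (x * w * sT n m)
  intro m hm hmi
  rw [invLen_mul_sT_iff _ hm]
  have hwm : w ⟨m, Nat.lt_of_succ_lt hm⟩ < w ⟨m + 1, hm⟩ :=
    (invLen_mul_sT_iff w hm).mp (hw' m hm hmi)
  simp only [Equiv.Perm.mul_apply]
  rcases lt_trichotomy (x (w ⟨m, Nat.lt_of_succ_lt hm⟩)) (x (w ⟨m + 1, hm⟩)) with hh | hh | hh
  · exact hh
  · exfalso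
    have := w.injective (x.injective hh)
    rw [Fin.ext_iff] at this
    simp only [] at this
    omega
  · exfalso
    have hF := hF1 _ _ hwm hh
    simp only [Equiv.Perm.inv_def, Equiv.symm_apply_apply] at hF
    have h1 : m < i := hF.1
    have h2 : i ≤ m + 1 := hF.2
    omega

end
end

section
/- Let λ ≤ μ be paths in Λ_{n,i}. Then there exists at most one type-2 Dyck partition of the region A(λ,μ); i.e. the set Conf²(λ,μ) has cardinality 0 or 1. Consequently the inverse parabolic Kazhdan–Lusztig polynomial g^I_{λ,μ}(v) = Σ_{P∈Conf²(λ,μ)} v^{|P|} is either 0 or a monomial. -/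
open scoped Classical

noncomputable section

section Aux

lemma dstrip_mem {x0 h : ℤ} {l : ℕ} {d : ℕ → ℤ} {a b : ℤ} :
    ((a, b) ∈ (Finset.range (2*l+1)).image fun k : ℕ => (x0 + (k:ℤ), h + d k)) ↔
      ∃ k : ℕ, k ≤ 2*l ∧ a = x0 + (k:ℤ) ∧ b = h + d k := by
  simp only [Finset.mem_image, Finset.mem_range, Nat.lt_succ_iff, Prod.ext_iff]
  constructor
  · rintro ⟨k, hk, h1, h2⟩; exact ⟨k, hk, h1.symm, h2.symm⟩
  · rintro ⟨k, hk, h1, h2⟩; exact ⟨k, hk, h1.symm, h2.symm⟩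

lemma dstrip_col_unique {x0 h : ℤ} {l : ℕ} {d : ℕ → ℤ} {a b b' : ℤ}
    (h1 : ((a, b) ∈ (Finset.range (2*l+1)).image fun k : ℕ => (x0 + (k:ℤ), h + d k)))
    (h2 : ((a, b') ∈ (Finset.range (2*l+1)).image fun k : ℕ => (x0 + (k:ℤ), h + d k))) :
    b = b' := by
  rw [dstrip_mem] at h1 h2
  obtain ⟨k, hk, rfl, rfl⟩ := h1
  obtain ⟨k', hk', he, he2⟩ := h2
  have : k = k' := by omega
  subst this; omega

lemma dstrip_col_iff {x0 h : ℤ} {l : ℕ} {d : ℕ → ℤ} {a : ℤ} :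
    (∃ b, (a, b) ∈ (Finset.range (2*l+1)).image fun k : ℕ => (x0 + (k:ℤ), h + d k)) ↔
      x0 ≤ a ∧ a ≤ x0 + 2*l := by
  constructor
  · rintro ⟨b, hb⟩; rw [dstrip_mem] at hb; obtain ⟨k, hk, rfl, rfl⟩ := hb; omega
  · rintro ⟨h1, h2⟩
    refine ⟨h + d (a - x0).toNat, ?_⟩
    rw [dstrip_mem]
    exact ⟨(a - x0).toNat, by omega, by omega, rfl⟩

lemma dstrip_adj {x0 h : ℤ} {l : ℕ} {d : ℕ → ℤ} {a y y' : ℤ}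
    (hstep : ∀ k < 2*l, d (k + 1) = d k + 1 ∨ d (k + 1) = d k - 1)
    (h1 : ((a, y) ∈ (Finset.range (2*l+1)).image fun k : ℕ => (x0 + (k:ℤ), h + d k)))
    (h2 : ((a + 1, y') ∈ (Finset.range (2*l+1)).image fun k : ℕ => (x0 + (k:ℤ), h + d k))) :
    y' = y + 1 ∨ y' = y - 1 := by
  rw [dstrip_mem] at h1 h2
  obtain ⟨k, hk, rfl, rfl⟩ := h1
  obtain ⟨k', hk', he, he2⟩ := h2
  have hkk : k' = k + 1 := by omega
  subst hkk
  rcases hstep k (by omega) with hs | hs <;> omega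

/-- membership in belowBoxes, concretely -/
lemma mem_belowBoxes {a y p q : ℤ} :
    ((p, q) ∈ belowBoxes (a, y)) ↔ (p = a ∧ q = y - 2) ∨ (p = a - 1 ∧ q = y - 1) ∨ (p = a + 1 ∧ q = y - 1) := by
  simp [belowBoxes, Prod.ext_iff]

/-- strips of a Dyck partition are contained in A -/
lemma strip_subset {P : Finset (Finset (ℤ × ℤ))} {A : Set (ℤ × ℤ)}
    (hP : IsDyckPartition P A) {D : Finset (ℤ × ℤ)} (hD : D ∈ P) :
    (D : Set (ℤ × ℤ)) ⊆ A := by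
  intro a ha
  rw [← hP.2.2]
  exact Set.mem_biUnion hD ha

lemma mem_strip_of_mem {P : Finset (Finset (ℤ × ℤ))} {A : Set (ℤ × ℤ)}
    (hP : IsDyckPartition P A) {a : ℤ × ℤ} (ha : a ∈ A) :
    ∃ D ∈ P, a ∈ D := by
  rw [← hP.2.2] at ha
  simpa using ha

/-- the strip through a box of globally minimal height is closed -/
lemma closed_of_min {P : Finset (Finset (ℤ × ℤ))} {A : Set (ℤ × ℤ)}
    (hP : IsDyckPartition P A) (hP2 : IsType2 P)
    {D : Finset (ℤ × ℤ)} (hD : D ∈ P) {v : ℤ × ℤ} (hvD : v ∈ D)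
    (hmin : ∀ c ∈ A, v.2 ≤ c.2) :
    ∀ b ∈ D, ∀ c ∈ belowBoxes b, c ∈ A → c ∈ D := by
  intro b hb c hc hcA
  by_contra hcD
  obtain ⟨D'', hD''P, hcD''⟩ := mem_strip_of_mem hP hcA
  have hne : D ≠ D'' := by rintro rfl; exact hcD hcD''
  have htr := hP2 D hD D'' hD''P hne ⟨b, hb, c, hc, hcD''⟩
  have hv2 : ((v.1, v.2 - 2) : ℤ × ℤ) ∈ D ∨ (v.1, v.2 - 2) ∈ D'' := by
    refine htr v hvD (v.1, v.2 - 2) ?_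
    rw [show v = (v.1, v.2) from rfl, mem_belowBoxes]; left; exact ⟨rfl, rfl⟩
  have hA2 : ((v.1, v.2 - 2) : ℤ × ℤ) ∈ A := by
    rcases hv2 with h2 | h2
    · exact strip_subset hP hD h2
    · exact strip_subset hP hD''P h2
  have h3 : v.2 ≤ v.2 - 2 := hmin _ hA2
  omega

/-- key lemma: two closed strips (w.r.t. type-2 partitions P, Q of A) sharing a box coincide -/
lemma closed_strip_eq
    {P Q : Finset (Finset (ℤ × ℤ))} {A : Set (ℤ × ℤ)}
    (hP1 : IsDyckPartition P A) (hP2 : IsType2 P)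
    (hQ1 : IsDyckPartition Q A) (hQ2 : IsType2 Q)
    {D E : Finset (ℤ × ℤ)} (hDP : D ∈ P) (hEQ : E ∈ Q)
    (hDc : ∀ b ∈ D, ∀ c ∈ belowBoxes b, c ∈ A → c ∈ D)
    (hEc : ∀ b ∈ E, ∀ c ∈ belowBoxes b, c ∈ A → c ∈ E)
    {v : ℤ × ℤ} (hvD : v ∈ D) (hvE : v ∈ E) : D = E := by
  obtain ⟨hD, xD, lD, dD, -, -, hDstep, -, hDeq⟩ := hP1.1 D hDP
  obtain ⟨hE, xE, lE, dE, -, -, hEstep, -, hEeq⟩ := hQ1.1 E hEQ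
  have hDsub : (D : Set (ℤ × ℤ)) ⊆ A := strip_subset hP1 hDP
  have hEsub : (E : Set (ℤ × ℤ)) ⊆ A := strip_subset hQ1 hEQ
  -- the step lemma
  have step : ∀ a y : ℤ, ∀ ε : ℤ, (ε = 1 ∨ ε = -1) →
      (a, y) ∈ D → (a, y) ∈ E →
      ((∃ b, (a + ε, b) ∈ D) ∨ (∃ b, (a + ε, b) ∈ E)) →
      ∃ y', (a + ε, y') ∈ D ∧ (a + ε, y') ∈ E := by
    intro a y ε hε hayD hayE hcol
    by_cases hbel : ((a + ε, y - 1) : ℤ × ℤ) ∈ A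
    · -- both closed strips absorb the lower diagonal box
      have hmb : ((a + ε, y - 1) : ℤ × ℤ) ∈ belowBoxes (a, y) := by
        rw [mem_belowBoxes]; rcases hε with rfl | rfl
        · right; right; exact ⟨rfl, rfl⟩
        · right; left; exact ⟨by ring, rfl⟩
      exact ⟨y - 1, hDc _ hayD _ hmb hbel, hEc _ hayE _ hmb hbel⟩
    · -- the lower box is absent; any box in column a+ε must be at height y+1
      have hDup : (∃ b, (a + ε, b) ∈ D) → (a + ε, y + 1) ∈ D := by
        rintro ⟨b, hb⟩
        have hb1 : b = y + 1 ∨ b = y - 1 := by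
          rcases hε with rfl | rfl
          · rw [hDeq] at hayD hb
            exact dstrip_adj hDstep hayD hb
          · rw [hDeq] at hayD hb
            have := dstrip_adj hDstep (show ((a + -1, b) ∈ _) from hb)
              (show ((a + -1 + 1, y) ∈ _) by rw [show a + -1 + 1 = a by ring]; exact hayD)
            omega
        rcases hb1 with rfl | rfl
        · exact hb
        · exact absurd (hDsub hb) hbel
      have hEup : (∃ b, (a + ε, b) ∈ E) → (a + ε, y + 1) ∈ E := by
        rintro ⟨b, hb⟩
        have hb1 : b = y + 1 ∨ b = y - 1 := by
          rcases hε with rfl | rfl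
          · rw [hEeq] at hayE hb
            exact dstrip_adj hEstep hayE hb
          · rw [hEeq] at hayE hb
            have := dstrip_adj hEstep (show ((a + -1, b) ∈ _) from hb)
              (show ((a + -1 + 1, y) ∈ _) by rw [show a + -1 + 1 = a by ring]; exact hayE)
            omega
        rcases hb1 with rfl | rfl
        · exact hb
        · exact absurd (hEsub hb) hbel
      -- the below-box memberships needed for the trigger
      have hmb1 : ((a, y) : ℤ × ℤ) ∈ belowBoxes (a + ε, y + 1) := by
        rw [mem_belowBoxes]; rcases hε with rfl | rfl
        · right; left; exact ⟨by ring, by ring⟩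
        · right; right; exact ⟨by ring, by ring⟩
      have hmb2 : ((a + ε, y - 1) : ℤ × ℤ) ∈ belowBoxes (a + ε, y + 1) := by
        rw [mem_belowBoxes]; left; exact ⟨rfl, by ring⟩
      rcases hcol with hcD | hcE
      · have huD : (a + ε, y + 1) ∈ D := hDup hcD
        refine ⟨y + 1, huD, ?_⟩
        by_cases hcE : ∃ b, (a + ε, b) ∈ E
        · exact hEup hcE
        · exfalso
          obtain ⟨C, hCQ, hUC⟩ := mem_strip_of_mem hQ1 (hDsub huD)
          have hCE : C ≠ E := by
            rintro rfl; exact hcE ⟨y + 1, hUC⟩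
          have htr := hQ2 C hCQ E hEQ hCE ⟨_, hUC, _, hmb1, hayE⟩
          have := htr _ hUC _ hmb2
          rcases this with h2 | h2
          · exact hbel (strip_subset hQ1 hCQ h2)
          · exact hbel (hEsub h2)
      · have huE : (a + ε, y + 1) ∈ E := hEup hcE
        refine ⟨y + 1, ?_, huE⟩
        by_cases hcD : ∃ b, (a + ε, b) ∈ D
        · exact hDup hcD
        · exfalso
          obtain ⟨C, hCP, hUC⟩ := mem_strip_of_mem hP1 (hEsub huE)
          have hCD : C ≠ D := by
            rintro rfl; exact hcD ⟨y + 1, hUC⟩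
          have htr := hP2 C hCP D hDP hCD ⟨_, hUC, _, hmb1, hayD⟩
          have := htr _ hUC _ hmb2
          rcases this with h2 | h2
          · exact hbel (strip_subset hP1 hCP h2)
          · exact hbel (hDsub h2)
  -- walking from v
  have hvD' : (v.1, v.2) ∈ D := by rwa [Prod.mk.eta]
  have hvE' : (v.1, v.2) ∈ E := by rwa [Prod.mk.eta]
  have key : ∀ t : ℕ, ∀ a : ℤ, (a = v.1 + t ∨ a = v.1 - t) →
      ((∃ b, (a, b) ∈ D) ∨ (∃ b, (a, b) ∈ E)) →
      ∃ y, (a, y) ∈ D ∧ (a, y) ∈ E := by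
    intro t
    induction t with
    | zero =>
      intro a ha _
      have : a = v.1 := by omega
      subst this
      exact ⟨v.2, hvD', hvE'⟩
    | succ t ih =>
      intro a ha hcol
      -- the previous column
      obtain ⟨a', ε, hε, haa', ha'⟩ :
          ∃ a' ε : ℤ, (ε = 1 ∨ ε = -1) ∧ a = a' + ε ∧ (a' = v.1 + t ∨ a' = v.1 - t) := by
        rcases ha with rfl | rfl
        · exact ⟨v.1 + t, 1, Or.inl rfl, by push_cast; ring, Or.inl rfl⟩
        · exact ⟨v.1 - t, -1, Or.inr rfl, by push_cast; ring, Or.inr rfl⟩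
      subst haa'
      -- the previous column is a column of D or of E
      have hcol' : (∃ b, (a', b) ∈ D) ∨ (∃ b, (a', b) ∈ E) := by
        rcases hcol with ⟨b, hb⟩ | ⟨b, hb⟩
        · left
          rw [hDeq] at hb hvD' ⊢
          rw [dstrip_col_iff]
          have h1 := dstrip_col_iff.1 ⟨b, hb⟩
          have h2 := dstrip_col_iff.1 ⟨v.2, hvD'⟩
          rcases ha' with rfl | rfl <;> rcases hε with rfl | rfl <;> omega
        · right
          rw [hEeq] at hb hvE' ⊢
          rw [dstrip_col_iff]
          have h1 := dstrip_col_iff.1 ⟨b, hb⟩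
          have h2 := dstrip_col_iff.1 ⟨v.2, hvE'⟩
          rcases ha' with rfl | rfl <;> rcases hε with rfl | rfl <;> omega
      obtain ⟨y, hyD, hyE⟩ := ih a' ha' hcol'
      exact step a' y ε hε hyD hyE hcol
  -- conclude
  apply Finset.ext
  rintro ⟨a, b⟩
  constructor
  · intro hab
    have ha : a = v.1 + (a - v.1).natAbs ∨ a = v.1 - (a - v.1).natAbs := by
      rcases Int.natAbs_eq (a - v.1) with h | h <;> omega
    obtain ⟨y, hyD, hyE⟩ := key _ a ha (Or.inl ⟨b, hab⟩)
    have : b = y := by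
      rw [hDeq] at hab hyD
      exact dstrip_col_unique hab hyD
    rwa [this]
  · intro hab
    have ha : a = v.1 + (a - v.1).natAbs ∨ a = v.1 - (a - v.1).natAbs := by
      rcases Int.natAbs_eq (a - v.1) with h | h <;> omega
    obtain ⟨y, hyD, hyE⟩ := key _ a ha (Or.inr ⟨b, hab⟩)
    have : b = y := by
      rw [hEeq] at hab hyE
      exact dstrip_col_unique hab hyE
    rwa [this]

end Aux

section Main

lemma dstrip_nonempty {D : Finset (ℤ × ℤ)} {h : ℤ} (hD : IsDyckStrip D h) : D.Nonempty := by
  obtain ⟨x0, l, d, -, -, -, -, rfl⟩ := hD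
  exact ⟨_, Finset.mem_image_of_mem _ (Finset.mem_range.2 (by omega) : 0 ∈ _)⟩

lemma empty_partition {Q : Finset (Finset (ℤ × ℤ))}
    (hQ1 : IsDyckPartition Q (∅ : Set (ℤ × ℤ))) : Q = ∅ := by
  by_contra hne
  obtain ⟨E, hE⟩ := Finset.nonempty_iff_ne_empty.2 hne
  obtain ⟨h, hstrip⟩ := hQ1.1 E hE
  obtain ⟨a, ha⟩ := dstrip_nonempty hstrip
  exact (strip_subset hQ1 hE ha)

lemma type2_unique_aux : ∀ n : ℕ, ∀ P Q : Finset (Finset (ℤ × ℤ)), ∀ A : Set (ℤ × ℤ),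
    (P.sup id).card ≤ n → IsDyckPartition P A → IsType2 P →
    IsDyckPartition Q A → IsType2 Q → P = Q := by
  intro n
  induction n with
  | zero =>
    intro P Q A hcard hP1 hP2 hQ1 hQ2
    have hPe : P = ∅ := by
      by_contra hne
      obtain ⟨D, hD⟩ := Finset.nonempty_iff_ne_empty.2 hne
      obtain ⟨h, hstrip⟩ := hP1.1 D hD
      obtain ⟨a, ha⟩ := dstrip_nonempty hstrip
      have : a ∈ P.sup id := Finset.mem_sup.2 ⟨D, hD, ha⟩
      have h0 : P.sup id = ∅ := Finset.card_eq_zero.1 (Nat.le_zero.1 hcard)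
      rw [h0] at this
      exact absurd this (Finset.notMem_empty a)
    subst hPe
    have hAe : A = ∅ := by
      rw [← hP1.2.2]; simp
    subst hAe
    exact (empty_partition hQ1).symm
  | succ n ih =>
    intro P Q A hcard hP1 hP2 hQ1 hQ2
    by_cases hPe : P = ∅
    · subst hPe
      have hAe : A = ∅ := by rw [← hP1.2.2]; simp
      subst hAe
      exact (empty_partition hQ1).symm
    · -- pick a box of minimal height
      have hsupne : (P.sup id).Nonempty := by
        obtain ⟨D, hD⟩ := Finset.nonempty_iff_ne_empty.2 hPe
        obtain ⟨h, hstrip⟩ := hP1.1 D hD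
        obtain ⟨a, ha⟩ := dstrip_nonempty hstrip
        exact ⟨a, Finset.mem_sup.2 ⟨D, hD, ha⟩⟩
      obtain ⟨v, hvsup, hvmin⟩ := Finset.exists_min_image (P.sup id) Prod.snd hsupne
      have hmin : ∀ c ∈ A, v.2 ≤ c.2 := by
        intro c hc
        obtain ⟨D', hD'P, hcD'⟩ := mem_strip_of_mem hP1 hc
        exact hvmin c (Finset.mem_sup.2 ⟨D', hD'P, hcD'⟩)
      obtain ⟨D, hDP, hvD⟩ := Finset.mem_sup.1 hvsup
      have hvA : v ∈ A := strip_subset hP1 hDP hvD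
      obtain ⟨E, hEQ, hvE⟩ := mem_strip_of_mem hQ1 hvA
      have hDc := closed_of_min hP1 hP2 hDP hvD hmin
      have hEc := closed_of_min hQ1 hQ2 hEQ hvE hmin
      have hDE : D = E := closed_strip_eq hP1 hP2 hQ1 hQ2 hDP hEQ hDc hEc hvD hvE
      -- the reduced partitions
      have herase : ∀ (R : Finset (Finset (ℤ × ℤ))), IsDyckPartition R A → IsType2 R →
          D ∈ R → IsDyckPartition (R.erase D) (A \ ↑D) ∧ IsType2 (R.erase D) := by
        intro R hR1 hR2 hDR
        refine ⟨⟨fun C hC => hR1.1 C (Finset.mem_of_mem_erase hC),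
          fun C hC C' hC' hne =>
            hR1.2.1 C (Finset.mem_of_mem_erase hC) C' (Finset.mem_of_mem_erase hC') hne, ?_⟩,
          fun C hC C' hC' hne htr =>
            hR2 C (Finset.mem_of_mem_erase hC) C' (Finset.mem_of_mem_erase hC') hne htr⟩
        ext a
        simp only [Set.mem_iUnion, Set.mem_diff, Finset.mem_coe, Finset.mem_erase, exists_prop]
        constructor
        · rintro ⟨C, ⟨hne, hCR⟩, haC⟩
          refine ⟨strip_subset hR1 hCR haC, fun haD =>
            (Finset.disjoint_left.1 (hR1.2.1 C hCR D hDR hne)) haC haD⟩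
        · rintro ⟨haA, haD⟩
          obtain ⟨C, hCR, haC⟩ := mem_strip_of_mem hR1 haA
          exact ⟨C, ⟨fun h => haD (h ▸ haC), hCR⟩, haC⟩
      obtain ⟨hP1', hP2'⟩ := herase P hP1 hP2 hDP
      obtain ⟨hQ1', hQ2'⟩ := herase Q hQ1 hQ2 (hDE ▸ hEQ)
      -- cardinality decreases
      have hsub : (P.erase D).sup id ⊆ (P.sup id) \ D := by
        intro a ha
        obtain ⟨C, hC, haC⟩ := Finset.mem_sup.1 ha
        obtain ⟨hne, hCP⟩ := Finset.mem_erase.1 hC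
        refine Finset.mem_sdiff.2 ⟨Finset.mem_sup.2 ⟨C, hCP, haC⟩, fun haD =>
          (Finset.disjoint_left.1 (hP1.2.1 C hCP D hDP hne)) haC haD⟩
      have hDsubsup : D ⊆ P.sup id := Finset.le_sup (f := id) hDP
      have hDcard : 1 ≤ D.card := Finset.card_pos.2 ⟨v, hvD⟩
      have hcard' : ((P.erase D).sup id).card ≤ n := by
        have h1 := Finset.card_le_card hsub
        have h2 := Finset.card_sdiff_of_subset hDsubsup
        have h3 := Finset.card_le_card hDsubsup
        omega
      have heq : P.erase D = Q.erase D := ih (P.erase D) (Q.erase D) (A \ ↑D) hcard' hP1' hP2' hQ1' hQ2'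
      -- conclude
      ext S
      by_cases hS : S = D
      · subst hS
        simp [hDP, hDE ▸ hEQ]
      · constructor
        · intro hSP
          have : S ∈ Q.erase D := heq ▸ Finset.mem_erase.2 ⟨hS, hSP⟩
          exact Finset.mem_of_mem_erase this
        · intro hSQ
          have : S ∈ P.erase D := heq.symm ▸ Finset.mem_erase.2 ⟨hS, hSQ⟩
          exact Finset.mem_of_mem_erase this

end Main

/-- there is at most one type-2 Dyck partition of the region `A(λ,μ)`. -/
theorem conf2_subsingleton (n i : ℕ) (hi1 : 1 ≤ i) (hi2 : i < n)
    (lam mu : Fin n → Bool) (hlam : lam ∈ pathSet n i) (hmu : mu ∈ pathSet n i)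
    (hle : pathLE i lam mu) :
    (Conf2 i lam mu).Subsingleton := by
  intro P hP Q hQ
  obtain ⟨hP1, hP2⟩ := hP
  obtain ⟨hQ1, hQ2⟩ := hQ
  exact type2_unique_aux ((P.sup id).card) P Q (region i lam mu) le_rfl hP1 hP2 hQ1 hQ2
end
end

section
/- Let λ < μ be paths and {C, D} a type-2 Dyck partition of A(λ,μ) with some box of C lying just below a box of D and hgt(C) < hgt(D). Then {C, D} is the unique Dyck partition of A(λ,μ) with two strips, and in particular Conf¹(λ,μ) contains no Dyck partition with exactly two elements. -/
open scoped Classical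

noncomputable section

/-- A Dyck strip, reparametrized by column: it occupies columns `a..b`, one box per
column, at height `f x ≤ h`, with endpoints at height `h` and steps `±1`. -/
lemma dyck_struct {S : Finset (ℤ × ℤ)} {h : ℤ} (hS : IsDyckStrip S h) :
    ∃ (a b : ℤ) (f : ℤ → ℤ), a ≤ b ∧ f a = h ∧ f b = h ∧
      (∀ x, a ≤ x → x < b → f (x + 1) = f x + 1 ∨ f (x + 1) = f x - 1) ∧
      (∀ x, a ≤ x → x ≤ b → f x ≤ h) ∧
      (∀ p : ℤ × ℤ, p ∈ S ↔ a ≤ p.1 ∧ p.1 ≤ b ∧ p.2 = f p.1) := by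
  obtain ⟨x₀, l, d, hd0, hd2l, hstep, hle, hSeq⟩ := hS
  refine ⟨x₀, x₀ + 2 * l, fun x => h + d (x - x₀).toNat, by omega, ?_, ?_, ?_, ?_, ?_⟩
  · show h + d (x₀ - x₀).toNat = h
    have e : (x₀ - x₀).toNat = 0 := by omega
    rw [e, hd0, add_zero]
  · show h + d ((x₀ + 2 * l : ℤ) - x₀).toNat = h
    have e : ((x₀ + 2 * l : ℤ) - x₀).toNat = 2 * l := by omega
    rw [e, hd2l, add_zero]
  · intro x hx1 hx2
    show h + d (x + 1 - x₀).toNat = h + d (x - x₀).toNat + 1 ∨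
      h + d (x + 1 - x₀).toNat = h + d (x - x₀).toNat - 1
    have h1 : (x + 1 - x₀).toNat = (x - x₀).toNat + 1 := by omega
    have h2 : (x - x₀).toNat < 2 * l := by omega
    rcases hstep _ h2 with hh | hh
    · left; rw [h1, hh]; ring
    · right; rw [h1, hh]; ring
  · intro x hx1 hx2
    show h + d (x - x₀).toNat ≤ h
    have h2 : (x - x₀).toNat ≤ 2 * l := by omega
    have := hle _ h2
    linarith
  · intro p
    rw [hSeq]
    simp only [Finset.mem_image, Finset.mem_range]
    constructor
    · rintro ⟨k, hk, rfl⟩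
      refine ⟨by omega, by omega, ?_⟩
      show h + d k = h + d ((x₀ + (k : ℤ)) - x₀).toNat
      have e : ((x₀ + (k : ℤ)) - x₀).toNat = k := by omega
      rw [e]
    · rintro ⟨h1, h2, h3⟩
      refine ⟨(p.1 - x₀).toNat, by omega, ?_⟩
      have hp1 : x₀ + ((p.1 - x₀).toNat : ℤ) = p.1 := by omega
      rw [hp1]
      exact Prod.ext rfl h3.symm

/-- for a type-2 partition `{C,D}` with a box of `C` just below a box of `D`
and `hgt(C) < hgt(D)`, `{C,D}` is the unique two-strip Dyck partition of the region, and no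
type-1 Dyck partition of the region has exactly two strips. -/
theorem overlying_low_unique (n i : ℕ) (hi1 : 1 ≤ i) (hi2 : i < n)
    (lam mu : Fin n → Bool) (hlam : lam ∈ pathSet n i) (hmu : mu ∈ pathSet n i)
    (hle : pathLE i lam mu)
    (C D : Finset (ℤ × ℤ)) (hc hd : ℤ)
    (hCs : IsDyckStrip C hc) (hDs : IsDyckStrip D hd) (hlt : hc < hd) (hne : C ≠ D)
    (hpart : IsDyckPartition {C, D} (region i lam mu))
    (htype2 : IsType2 {C, D})
    (hbelow : ∃ b ∈ D, (b.1, b.2 - 2) ∈ C) :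
    (∀ P, IsDyckPartition P (region i lam mu) → P.card = 2 → P = {C, D}) ∧
    (∀ P, IsDyckPartition P (region i lam mu) → P.card = 2 → ¬ IsType1 P) := by
  classical
  obtain ⟨aC, bC, fC, habC, hfCa, hfCb, hstepC, hleC, hmemC⟩ := dyck_struct hCs
  obtain ⟨aD, bD, fD, habD, hfDa, hfDb, hstepD, hleD, hmemD⟩ := dyck_struct hDs
  have hCmemP : C ∈ ({C, D} : Finset (Finset (ℤ × ℤ))) := by simp
  have hDmemP : D ∈ ({C, D} : Finset (Finset (ℤ × ℤ))) := by simp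
  have hdisj : Disjoint C D := hpart.2.1 C hCmemP D hDmemP hne
  have hUnion : ∀ p : ℤ × ℤ, p ∈ region i lam mu ↔ p ∈ C ∨ p ∈ D := by
    intro p; rw [← hpart.2.2]; simp
  -- type-2 consequence: everything below `D` lies in `C ∪ D`
  have htype2' : ∀ b ∈ D, ∀ c ∈ belowBoxes b, c ∈ D ∨ c ∈ C := by
    obtain ⟨b, hb, hbc⟩ := hbelow
    refine htype2 D hDmemP C hCmemP (Ne.symm hne) ⟨b, hb, (b.1, b.2 - 2), ?_, hbc⟩
    simp [belowBoxes]
  have hbD0 : (aD, hd) ∈ D := (hmemD _).2 ⟨le_refl _, habD, hfDa.symm⟩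
  have hbD1 : (bD, hd) ∈ D := (hmemD _).2 ⟨habD, le_refl _, hfDb.symm⟩
  -- the boxes SW of the left end and SE of the right end of `D` lie in `C`
  have p1 : (aD - 1, hd - 1) ∈ C := by
    have hc1 : (aD - 1, hd - 1) ∈ belowBoxes (aD, hd) := by simp [belowBoxes]
    rcases htype2' _ hbD0 _ hc1 with h | h
    · have : aD ≤ aD - 1 := ((hmemD _).1 h).1
      omega
    · exact h
  have p2 : (bD + 1, hd - 1) ∈ C := by
    have hc1 : (bD + 1, hd - 1) ∈ belowBoxes (bD, hd) := by simp [belowBoxes]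
    rcases htype2' _ hbD1 _ hc1 with h | h
    · have : bD + 1 ≤ bD := ((hmemD _).1 h).2.1
      omega
    · exact h
  have haC1 : aC ≤ aD - 1 := ((hmemC _).1 p1).1
  have haC2 : aD - 1 ≤ bC := ((hmemC _).1 p1).2.1
  have hfCp1 : hd - 1 = fC (aD - 1) := ((hmemC _).1 p1).2.2
  have hbC1 : bD + 1 ≤ bC := ((hmemC _).1 p2).2.1
  have hfCp2 : hd - 1 = fC (bD + 1) := ((hmemC _).1 p2).2.2
  have hhc : hc = hd - 1 := by
    have := hleC (aD - 1) haC1 haC2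
    linarith
  -- parity: two region boxes in the same column differ by an even number
  have hpar : ∀ x y y' : ℤ, (x, y) ∈ region i lam mu → (x, y') ∈ region i lam mu →
      ∃ t : ℤ, y' = y + 2 * t := by
    intro x y y' h1 h2
    simp only [region, Set.mem_setOf_eq] at h1 h2
    obtain ⟨m, hm⟩ := h1.2.2.1
    obtain ⟨m', hm'⟩ := h2.2.2.1
    exact ⟨m' - m, by linarith⟩
  -- column convexity of the region
  have hconv : ∀ x y y' : ℤ, (x, y) ∈ region i lam mu → (x, y') ∈ region i lam mu →
      y + 2 < y' → (x, y + 2) ∈ region i lam mu := by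
    intro x y y' h1 h2 hlt'
    simp only [region, Set.mem_setOf_eq] at h1 h2 ⊢
    obtain ⟨m, hm⟩ := h1.2.2.1
    exact ⟨h1.1, h1.2.1, ⟨m + 1, by linarith⟩, by linarith [h1.2.2.2.1],
      by linarith [h2.2.2.2.2]⟩
  -- on D's columns, the boxes of C and D are vertically adjacent
  have hpm : ∀ x, aD ≤ x → x ≤ bD → fD x = fC x + 2 ∨ fD x = fC x - 2 := by
    intro x h1 h2
    have hCmem : (x, fC x) ∈ C := (hmemC _).2 ⟨by linarith, by linarith, rfl⟩
    have hDmem : (x, fD x) ∈ D := (hmemD _).2 ⟨h1, h2, rfl⟩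
    have hCA : (x, fC x) ∈ region i lam mu := (hUnion _).2 (Or.inl hCmem)
    have hDA : (x, fD x) ∈ region i lam mu := (hUnion _).2 (Or.inr hDmem)
    have hne' : fC x ≠ fD x := by
      intro he
      exact Finset.disjoint_left.1 hdisj hCmem (by rw [he]; exact hDmem)
    obtain ⟨t, ht⟩ := hpar x (fC x) (fD x) hCA hDA
    by_contra hcon
    push_neg at hcon
    have hcase : t = 0 ∨ t = 1 ∨ t = -1 ∨ 2 ≤ t ∨ t ≤ -2 := by omega
    rcases hcase with h | h | h | h | h
    · exact hne' (by linarith)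
    · exact hcon.1 (by linarith)
    · exact hcon.2 (by linarith)
    · have hmid : (x, fC x + 2) ∈ region i lam mu :=
        hconv x (fC x) (fD x) hCA hDA (by linarith)
      rcases (hUnion _).1 hmid with hm | hm
      · have : fC x + 2 = fC x := ((hmemC _).1 hm).2.2
        linarith
      · have : fC x + 2 = fD x := ((hmemD _).1 hm).2.2
        linarith
    · have hmid : (x, fD x + 2) ∈ region i lam mu :=
        hconv x (fD x) (fC x) hDA hCA (by linarith)
      rcases (hUnion _).1 hmid with hm | hm
      · have : fD x + 2 = fC x := ((hmemC _).1 hm).2.2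
        linarith
      · have : fD x + 2 = fD x := ((hmemD _).1 hm).2.2
        linarith
  -- D is on top throughout its columns
  have htop : ∀ x, aD ≤ x → x ≤ bD → fD x = fC x + 2 := by
    refine fun x hx => Int.le_induction (motive := fun x _ => x ≤ bD → fD x = fC x + 2) ?_ ?_ x hx
    · intro _
      have h0 := hpm aD le_rfl habD
      have h1 := hleC aD (by linarith) (by linarith)
      rcases h0 with h0 | h0
      · exact h0
      · linarith [hfDa]
    · intro x hx ih hxb
      have e := ih (by linarith)
      have s1 := hstepD x hx (by linarith)
      have s2 := hstepC x (by linarith) (by linarith)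
      have hp := hpm (x + 1) (by linarith) hxb
      rcases s1 with s1 | s1 <;> rcases s2 with s2 | s2 <;> rcases hp with hp | hp <;> linarith
  -- the region's boxes, by columns
  have hAcol : ∀ p : ℤ × ℤ, p ∈ region i lam mu ↔
      ((aC ≤ p.1 ∧ p.1 ≤ bC ∧ p.2 = fC p.1) ∨ (aD ≤ p.1 ∧ p.1 ≤ bD ∧ p.2 = fD p.1)) :=
    fun p => (hUnion p).trans (or_congr (hmemC p) (hmemD p))
  -- KEY: any two-strip partition {E, F} of the region with (aD, hd) ∈ F equals {C, D}
  have key : ∀ E F : Finset (ℤ × ℤ), (∃ h1, IsDyckStrip E h1) → (∃ h2, IsDyckStrip F h2) →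
      Disjoint E F → (∀ p : ℤ × ℤ, p ∈ region i lam mu ↔ p ∈ E ∨ p ∈ F) →
      (aD, hd) ∈ F → F = D ∧ E = C := by
    rintro E F ⟨h1, hE⟩ ⟨h2, hF⟩ hdisj' hU' htopF
    obtain ⟨a1, b1, f1, hab1, hf1a, hf1b, hstep1, hle1, hmem1⟩ := dyck_struct hE
    obtain ⟨a2, b2, f2, hab2, hf2a, hf2b, hstep2, hle2, hmem2⟩ := dyck_struct hF
    have ha2 : a2 ≤ aD := ((hmem2 _).1 htopF).1
    have hb2 : aD ≤ b2 := ((hmem2 _).1 htopF).2.1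
    have hf2aD : hd = f2 aD := ((hmem2 _).1 htopF).2.2
    have hh2 : hd ≤ h2 := by
      have := hle2 aD ha2 hb2
      linarith
    have hfCaD : fC aD = hd - 2 := by
      have h' := htop aD le_rfl habD
      linarith [hfDa]
    have hbotA : (aD, hd - 2) ∈ region i lam mu :=
      (hAcol _).2 (Or.inl ⟨show aC ≤ aD by linarith, show aD ≤ bC by linarith,
        show hd - 2 = fC aD by linarith⟩)
    have hbotE : (aD, hd - 2) ∈ E := by
      rcases (hU' _).1 hbotA with h | h
      · exact h
      · have he : hd - 2 = f2 aD := ((hmem2 _).1 h).2.2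
        linarith
    have ha1 : a1 ≤ aD := ((hmem1 _).1 hbotE).1
    have hb1 : aD ≤ b1 := ((hmem1 _).1 hbotE).2.1
    have hf1aD : hd - 2 = f1 aD := ((hmem1 _).1 hbotE).2.2
    -- E takes the bottom box and F the top box in every column of D
    have hconst : ∀ x, aD ≤ x → x ≤ bD →
        (a1 ≤ x ∧ x ≤ b1 ∧ f1 x = fC x) ∧ (a2 ≤ x ∧ x ≤ b2 ∧ f2 x = fC x + 2) := by
      refine fun x hx => Int.le_induction
        (motive := fun x _ => x ≤ bD →
          (a1 ≤ x ∧ x ≤ b1 ∧ f1 x = fC x) ∧ (a2 ≤ x ∧ x ≤ b2 ∧ f2 x = fC x + 2)) ?_ ?_ x hx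
      · intro _
        exact ⟨⟨ha1, hb1, by linarith⟩, ⟨ha2, hb2, by linarith⟩⟩
      · intro x hx ih hxb
        have ihx := ih (by linarith)
        have hbotA' : (x + 1, fC (x + 1)) ∈ region i lam mu :=
          (hAcol _).2 (Or.inl ⟨show aC ≤ x + 1 by linarith, show x + 1 ≤ bC by linarith, rfl⟩)
        have htopA' : (x + 1, fC (x + 1) + 2) ∈ region i lam mu := by
          refine (hAcol _).2 (Or.inr ⟨show aD ≤ x + 1 by linarith, hxb, ?_⟩)
          have := htop (x + 1) (by linarith) hxb
          show fC (x + 1) + 2 = fD (x + 1)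
          linarith
        have s2 := hstepC x (by linarith) (by linarith)
        rcases (hU' _).1 hbotA' with hbE | hbF <;> rcases (hU' _).1 htopA' with htE | htF
        · -- both boxes in E: impossible
          have e1 : fC (x + 1) = f1 (x + 1) := ((hmem1 _).1 hbE).2.2
          have e2 : fC (x + 1) + 2 = f1 (x + 1) := ((hmem1 _).1 htE).2.2
          linarith
        · -- the good case
          have m1 := (hmem1 _).1 hbE
          have m2 := (hmem2 _).1 htF
          exact ⟨⟨m1.1, m1.2.1, m1.2.2.symm⟩, ⟨m2.1, m2.2.1, m2.2.2.symm⟩⟩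
        · -- E on top, F on bottom: contradicts the step conditions
          have m1 := (hmem1 _).1 htE
          have m2 := (hmem2 _).1 hbF
          have e1 : fC (x + 1) + 2 = f1 (x + 1) := m1.2.2
          have e2 : fC (x + 1) = f2 (x + 1) := m2.2.2
          have hxb1 : x + 1 ≤ b1 := m1.2.1
          have hxb2 : x + 1 ≤ b2 := m2.2.1
          have s1 := hstep1 x ihx.1.1 (by linarith)
          have s3 := hstep2 x ihx.2.1 (by linarith)
          have e0 : f1 x = fC x := ihx.1.2.2
          have e0' : f2 x = fC x + 2 := ihx.2.2.2
          exfalso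
          rcases s1 with s1 | s1 <;> rcases s2 with s2 | s2 <;> rcases s3 with s3 | s3 <;> linarith
        · -- both boxes in F: impossible
          have e1 : fC (x + 1) = f2 (x + 1) := ((hmem2 _).1 hbF).2.2
          have e2 : fC (x + 1) + 2 = f2 (x + 1) := ((hmem2 _).1 htF).2.2
          linarith
    -- F occupies exactly the columns of D
    have ha2' : a2 = aD := by
      by_contra hcon
      have ha2lt : a2 < aD := lt_of_le_of_ne ha2 hcon
      have hend : (a2, h2) ∈ F := (hmem2 _).2 ⟨le_refl _, hab2, hf2a.symm⟩
      have hendA : (a2, h2) ∈ region i lam mu := (hU' _).2 (Or.inr hend)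
      rcases (hAcol _).1 hendA with ⟨u1, u2, u3⟩ | ⟨u1, u2, u3⟩
      · have hu1 : aC ≤ a2 := u1
        have hu2 : a2 ≤ bC := u2
        have hu3 : h2 = fC a2 := u3
        have := hleC a2 hu1 hu2
        linarith
      · have : aD ≤ a2 := u1
        linarith
    have hbD2 : bD ≤ b2 := (hconst bD habD le_rfl).2.2.1
    have hb2' : b2 = bD := by
      by_contra hcon
      have hblt : bD < b2 := lt_of_le_of_ne hbD2 (Ne.symm hcon)
      have hend : (b2, h2) ∈ F := (hmem2 _).2 ⟨hab2, le_refl _, hf2b.symm⟩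
      have hendA : (b2, h2) ∈ region i lam mu := (hU' _).2 (Or.inr hend)
      rcases (hAcol _).1 hendA with ⟨u1, u2, u3⟩ | ⟨u1, u2, u3⟩
      · have hu1 : aC ≤ b2 := u1
        have hu2 : b2 ≤ bC := u2
        have hu3 : h2 = fC b2 := u3
        have := hleC b2 hu1 hu2
        linarith
      · have : b2 ≤ bD := u2
        linarith
    subst ha2' hb2'
    have hFD : F = D := by
      ext p
      rw [hmem2 p, hmemD p]
      constructor
      · rintro ⟨u1, u2, u3⟩
        refine ⟨u1, u2, ?_⟩
        have h4 := (hconst p.1 u1 u2).2.2.2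
        have h5 := htop p.1 u1 u2
        linarith
      · rintro ⟨u1, u2, u3⟩
        refine ⟨u1, u2, ?_⟩
        have h4 := (hconst p.1 u1 u2).2.2.2
        have h5 := htop p.1 u1 u2
        linarith
    refine ⟨hFD, ?_⟩
    ext p
    constructor
    · intro hp
      rcases (hUnion p).1 ((hU' p).2 (Or.inl hp)) with h | h
      · exact h
      · exact absurd (hFD.symm ▸ h : p ∈ F) (Finset.disjoint_left.1 hdisj' hp)
    · intro hp
      rcases (hU' p).1 ((hUnion p).2 (Or.inl hp)) with h | h
      · exact h
      · exact absurd (hFD ▸ h : p ∈ D) (Finset.disjoint_left.1 hdisj hp)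
  -- Part 1
  have part1 : ∀ P, IsDyckPartition P (region i lam mu) → P.card = 2 → P = {C, D} := by
    intro P hP hcard
    obtain ⟨E, F, hEF, rfl⟩ := Finset.card_eq_two.1 hcard
    have hEP : E ∈ ({E, F} : Finset (Finset (ℤ × ℤ))) := by simp
    have hFP : F ∈ ({E, F} : Finset (Finset (ℤ × ℤ))) := by simp
    have hSE := hP.1 E hEP
    have hSF := hP.1 F hFP
    have hdisj' : Disjoint E F := hP.2.1 E hEP F hFP hEF
    have hU' : ∀ p : ℤ × ℤ, p ∈ region i lam mu ↔ p ∈ E ∨ p ∈ F := by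
      intro p; rw [← hP.2.2]; simp
    have hAD : (aD, hd) ∈ region i lam mu := (hUnion _).2 (Or.inr hbD0)
    rcases (hU' _).1 hAD with h | h
    · obtain ⟨h1, h2⟩ := key F E hSF hSE hdisj'.symm (fun p => (hU' p).trans or_comm) h
      rw [h1, h2, Finset.pair_comm]
    · obtain ⟨h1, h2⟩ := key E F hSE hSF hdisj' hU' h
      rw [h1, h2]
  refine ⟨part1, ?_⟩
  -- Part 2
  intro P hP hcard htype1
  rw [part1 P hP hcard] at htype1
  obtain ⟨b, hb, hbc⟩ := hbelow
  have hex : ∃ q ∈ C, (q.1, q.2 + 2) ∈ D := by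
    refine ⟨(b.1, b.2 - 2), hbc, ?_⟩
    have e : b.2 - 2 + 2 = b.2 := by ring
    show (b.1, b.2 - 2 + 2) ∈ D
    rw [e]
    exact hb
  have habove := htype1 C (by simp) D (by simp) hne hex (aD - 1, hd - 1) p1
  have : aD ≤ aD - 1 := ((hmemD _).1 habove).1
  omega
end
end
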